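/- arXiv:2112.04237 — 13 statements merged into one kernel-verified Lean document; each statement's English description precedes it below -/
import Mathlib

section
/- Let R be a 0-dimensional local (or graded) ring, ω_R its canonical module, and suppose tr(ω_R) can be generated by n elements. Then there exist R-module homomorphisms φ_1, ..., φ_n : ω_R → R with tr(ω_R) = φ_1(ω_R) + ... + φ_n(ω_R); i.e., the Teter number of R is at most μ(tr(ω_R)). -/
/-- For a 0-dimensional (finite-dimensional) local `K`-algebra `R`, the canonical module is
`ω_R = Hom_K(R,K)` with `R`-action `(a•ψ)(b) = ψ(a*b)`.  A `K`-linear map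
`f : ω_R → R` is `R`-linear precisely when it satisfies the following condition. -/
def RLinearDualMap (K R : Type*) [Field K] [CommRing R] [Algebra K R]
    (f : (R →ₗ[K] K) →ₗ[K] R) : Prop :=
  ∀ (a : R) (ψ : R →ₗ[K] K), f (ψ.comp (LinearMap.mulLeft K a)) = a * f ψ

/-- The trace of the canonical module: the ideal generated by the images of all
`R`-module homomorphisms `ω_R → R`. -/
def traceIdeal (K R : Type*) [Field K] [CommRing R] [Algebra K R] : Ideal R :=
  Ideal.span {x : R | ∃ f : (R →ₗ[K] K) →ₗ[K] R, RLinearDualMap K R f ∧ x ∈ Set.range f}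

/-- Key abstract lemma: over a local ring, if an ideal `T` is the supremum of a family of
ideals `I a` and is generated (modulo an auxiliary ideal `N ≤ T`) by a finset of cardinality
`m`, then `m` members of the family (together with `N`) suffice to reach `T`. -/
lemma teter_aux {R : Type*} [CommRing R] [IsLocalRing R]
    {ι : Type*} [Nonempty ι] (I : ι → Ideal R) (T : Ideal R) (hfg : T.FG)
    (hsup : (⨆ a, I a) = T) :
    ∀ (m : ℕ) (s : Finset R), s.card = m → ∀ N : Ideal R, N ≤ T →
      Ideal.span (s : Set R) ⊔ N = T →
      ∃ g : Fin m → ι, (⨆ i, I (g i)) ⊔ N = T := by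
  classical
  have hle : ∀ a, I a ≤ T := fun a => hsup ▸ le_iSup I a
  have hmle : IsLocalRing.maximalIdeal R ≤ Ideal.jacobson ⊥ := by
    rw [IsLocalRing.jacobson_eq_maximalIdeal ⊥ bot_ne_top]
  intro m
  induction m with
  | zero =>
    intro s hcard N hN hTs
    rw [Finset.card_eq_zero] at hcard
    subst hcard
    refine ⟨Fin.elim0, ?_⟩
    rw [iSup_of_empty]
    simpa using hTs
  | succ m ih =>
    intro s hcard N hN hTs
    by_cases hc : T ≤ N ⊔ (IsLocalRing.maximalIdeal R) • T
    · -- Nakayama: N = T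
      have hNT : N ⊔ T = N ⊔ (⊥ : Ideal R) • T :=
        Submodule.sup_eq_sup_smul_of_le_smul_of_le_jacobson hfg hmle hc
      rw [Submodule.bot_smul, sup_bot_eq] at hNT
      have hN' : N = T := le_antisymm hN (by rw [← hNT]; exact le_sup_right)
      refine ⟨fun _ => Classical.arbitrary ι, ?_⟩
      rw [hN']
      exact sup_eq_right.mpr (iSup_le fun _ => hle _)
    · -- pick a member of the family not inside N ⊔ m•T
      have h1 : ¬ (⨆ a, I a) ≤ N ⊔ (IsLocalRing.maximalIdeal R) • T := by
        rw [hsup]; exact hc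
      rw [iSup_le_iff] at h1
      push_neg at h1
      obtain ⟨α, hα⟩ := h1
      obtain ⟨t, htI, htn⟩ := SetLike.not_le_iff_exists.mp hα
      have htT : t ∈ T := hle α htI
      rw [← hTs] at htT
      obtain ⟨y, hy, u, hu, hyu⟩ := Submodule.mem_sup.mp htT
      obtain ⟨a, -, ha⟩ := Submodule.mem_span_finset.mp hy
      have hsT : Ideal.span (s : Set R) ≤ T := le_trans le_sup_left hTs.le
      by_cases hall : ∀ x ∈ s, a x ∈ IsLocalRing.maximalIdeal R
      · exfalso
        apply htn
        have hyM : y ∈ (IsLocalRing.maximalIdeal R) • T := by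
          rw [← ha]
          exact Submodule.sum_mem _ fun x hx =>
            Submodule.smul_mem_smul (hall x hx) (hsT (Submodule.subset_span hx))
        exact Submodule.mem_sup.mpr ⟨u, hu, y, hyM, by rw [← hyu]; ring⟩
      · push_neg at hall
        obtain ⟨x0, hx0, hax0⟩ := hall
        have hunit : IsUnit (a x0) := by
          by_contra h
          exact hax0 ((IsLocalRing.mem_maximalIdeal _).mpr (mem_nonunits_iff.mpr h))
        set N' : Ideal R := N ⊔ I α with hN'def
        have hN'T : N' ≤ T := sup_le hN (hle α)
        -- the key identity
        have hkey : a x0 * x0 = t - u - ∑ x ∈ s.erase x0, a x • x := by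
          have hsum : a x0 • x0 + ∑ x ∈ s.erase x0, a x • x = ∑ x ∈ s, a x • x :=
            Finset.add_sum_erase s (fun x => a x • x) hx0
          rw [ha] at hsum
          have : y + u = t := hyu
          simp only [smul_eq_mul] at hsum ⊢
          linear_combination hsum + this
        have hx0mem : x0 ∈ Ideal.span ((s.erase x0 : Finset R) : Set R) ⊔ N' := by
          set M : Ideal R := Ideal.span ((s.erase x0 : Finset R) : Set R) ⊔ N' with hM
          have ht' : t ∈ M := Submodule.mem_sup_right (Submodule.mem_sup_right htI)
          have hu' : u ∈ M := Submodule.mem_sup_right (Submodule.mem_sup_left hu)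
          have hsum' : (∑ x ∈ s.erase x0, a x • x) ∈ M :=
            Submodule.sum_mem _ fun x hx =>
              Submodule.smul_mem _ _ (Submodule.mem_sup_left (Submodule.subset_span hx))
          have : a x0 * x0 ∈ M := by
            rw [hkey]; exact M.sub_mem (M.sub_mem ht' hu') hsum'
          rwa [Ideal.unit_mul_mem_iff_mem M hunit] at this
        have hspan : Ideal.span ((s.erase x0 : Finset R) : Set R) ⊔ N' = T := by
          apply le_antisymm
          · exact sup_le (le_trans (Ideal.span_mono (by
              exact_mod_cast Finset.erase_subset x0 s)) hsT) hN'T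
          · rw [← hTs]
            apply sup_le
            · rw [Ideal.span_le]
              intro x hx
              rcases eq_or_ne x x0 with rfl | hne
              · exact hx0mem
              · exact Submodule.mem_sup_left
                  (Submodule.subset_span (Finset.mem_erase.mpr ⟨hne, hx⟩))
            · exact le_trans le_sup_left le_sup_right
        obtain ⟨g, hg⟩ := ih (s.erase x0)
          (by rw [Finset.card_erase_of_mem hx0, hcard]; rfl) N' hN'T hspan
        refine ⟨(Fin.cons α g : Fin (m + 1) → ι), ?_⟩
        have hcons : (⨆ i, I ((Fin.cons α g : Fin (m + 1) → ι) i)) = I α ⊔ ⨆ i, I (g i) := by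
          apply le_antisymm
          · refine iSup_le fun i => ?_
            induction i using Fin.cases with
            | zero => rw [Fin.cons_zero]; exact le_sup_left
            | succ j => rw [Fin.cons_succ]; exact le_trans (le_iSup (fun i => I (g i)) j) le_sup_right
          · refine sup_le ?_ (iSup_le fun j => ?_)
            · exact le_iSup_of_le 0 (by rw [Fin.cons_zero])
            · exact le_iSup_of_le j.succ (by rw [Fin.cons_succ])
        rw [hcons, sup_comm (I α) _, sup_assoc, sup_comm (I α) N, ← hN'def]
        exact hg

/-- If `tr(ω_R)` can be generated by `n` elements, then there are `n` homomorphisms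
`φ_i : ω_R → R` with `tr(ω_R) = φ_1(ω_R) + ⋯ + φ_n(ω_R)`; i.e. the Teter number of `R`
is at most `μ(tr(ω_R))`. -/
theorem stmt1 (K R : Type*) [Field K] [CommRing R] [Algebra K R]
    [IsLocalRing R] [FiniteDimensional K R]
    (n : ℕ) (s : Finset R) (hcard : s.card = n)
    (hgen : Ideal.span (s : Set R) = traceIdeal K R) :
    ∃ f : Fin n → ((R →ₗ[K] K) →ₗ[K] R),
      (∀ i, RLinearDualMap K R (f i)) ∧
      traceIdeal K R = Ideal.span (⋃ i, Set.range (f i)) := by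
  classical
  set ι := {f : (R →ₗ[K] K) →ₗ[K] R // RLinearDualMap K R f} with hι
  have hnonempty : Nonempty ι := ⟨⟨0, fun a ψ => by simp⟩⟩
  set I : ι → Ideal R := fun f => Ideal.span (Set.range f.1) with hI
  have hsetEq : {x : R | ∃ f : (R →ₗ[K] K) →ₗ[K] R, RLinearDualMap K R f ∧ x ∈ Set.range f}
      = ⋃ (f : ι), Set.range f.1 := by
    ext x
    simp only [Set.mem_setOf_eq, Set.mem_iUnion]
    constructor
    · rintro ⟨f, hf, hx⟩; exact ⟨⟨f, hf⟩, hx⟩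
    · rintro ⟨⟨f, hf⟩, hx⟩; exact ⟨f, hf, hx⟩
  have hsup : (⨆ a : ι, I a) = traceIdeal K R := by
    rw [traceIdeal, hsetEq, hI]
    exact (Submodule.span_iUnion _).symm
  have hfg : (traceIdeal K R).FG := ⟨s, hgen⟩
  obtain ⟨g, hg⟩ := teter_aux I (traceIdeal K R) hfg hsup n s hcard ⊥ bot_le
    (by rw [sup_bot_eq, hgen])
  rw [sup_bot_eq] at hg
  refine ⟨fun i => (g i).1, fun i => (g i).2, ?_⟩
  rw [show Ideal.span (⋃ i, Set.range ((g i).1)) = ⨆ i, Ideal.span (Set.range ((g i).1))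
    from Submodule.span_iUnion _]
  exact hg.symm
end

section
/- Let R be a 0-dimensional local K-algebra and I ⊆ R an ideal. Then I is a τ-ideal (there is a surjective R-module homomorphism ω_R → I) if and only if there exists an ideal J ⊆ R with J ≅ Hom_K(I, K) as R-modules. -/
section Aux

variable {K : Type*} [Field K]

/-- Two vectors agreeing on all dual functionals are equal. -/
lemma dual_sep {M : Type*} [AddCommGroup M] [Module K M] {x y : M}
    (h : ∀ φ : Module.Dual K M, φ x = φ y) : x = y := by
  rw [← sub_eq_zero, ← Module.forall_dual_apply_eq_zero_iff K (x - y)]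
  intro φ
  simp [map_sub, h φ]

variable {R : Type*} [CommRing R] [Algebra K R]

/-- Multiplication by `a : R` on an ideal `I`, as a `K`-linear map. -/
def smulMap (I : Ideal R) (a : R) : I →ₗ[K] I where
  toFun x := a • x
  map_add' x y := smul_add a x y
  map_smul' c x := by
    ext
    simp [smul_eq_mul, Algebra.mul_smul_comm]

@[simp] lemma smulMap_apply (I : Ideal R) (a : R) (x : I) :
    (smulMap (K := K) I a) x = a • x := rfl

/-- The inclusion of an ideal as a `K`-linear map. -/
def idealVal (I : Ideal R) : I →ₗ[K] R where
  toFun := Subtype.val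
  map_add' _ _ := rfl
  map_smul' _ _ := rfl

@[simp] lemma idealVal_apply (I : Ideal R) (x : I) : (idealVal (K := K) I) x = ↑x := rfl

end Aux

/-- An ideal `I` of a 0-dimensional local `K`-algebra `R` is a τ-ideal (there is a
surjective `R`-module homomorphism `ω_R → I`) iff `I` has a companion, i.e. an ideal
`J` with `J ≅ Hom_K(I,K)` as `R`-modules. -/
theorem stmt3 (K R : Type*) [Field K] [CommRing R] [Algebra K R]
    [IsLocalRing R] [FiniteDimensional K R] (I : Ideal R) :
    (∃ f : (R →ₗ[K] K) →ₗ[K] R, RLinearDualMap K R f ∧ Set.range f = (I : Set R)) ↔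
    (∃ (J : Ideal R) (e : J ≃ₗ[K] (I →ₗ[K] K)),
      ∀ (a : R) (y : J) (x : I), e (a • y) x = e y (a • x)) := by
  constructor
  · rintro ⟨f, hf, hrange⟩
    -- corestrict f to a surjection F : Dual K R → I
    have hmem : ∀ ψ : R →ₗ[K] K, f ψ ∈ I := by
      intro ψ
      rw [← SetLike.mem_coe, ← hrange]
      exact ⟨ψ, rfl⟩
    set F : (R →ₗ[K] K) →ₗ[K] I :=
      { toFun := fun ψ => ⟨f ψ, hmem ψ⟩
        map_add' := fun ψ₁ ψ₂ => Subtype.ext (map_add f ψ₁ ψ₂)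
        map_smul' := fun c ψ => Subtype.ext (map_smul f c ψ) } with hFdef
    have hFcoe : ∀ ψ, ((F ψ : I) : R) = f ψ := fun _ => rfl
    have hFsurj : Function.Surjective F := by
      rintro ⟨x, hx⟩
      rw [← SetLike.mem_coe, ← hrange] at hx
      obtain ⟨ψ, hψ⟩ := hx
      exact ⟨ψ, Subtype.ext hψ⟩
    -- the candidate for J is the range of g := evalEquiv⁻¹ ∘ F.dualMap
    set g : Module.Dual K I →ₗ[K] R :=
      (Module.evalEquiv K R).symm.toLinearMap ∘ₗ F.dualMap with hgdef
    have key : ∀ (χ : Module.Dual K I) (ψ : Module.Dual K R), ψ (g χ) = χ (F ψ) := by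
      intro χ ψ
      simp [hgdef, Module.apply_evalEquiv_symm_apply]
    have hginj : Function.Injective g := by
      have h1 : Function.Injective F.dualMap :=
        LinearMap.dualMap_injective_of_surjective hFsurj
      intro χ₁ χ₂ h
      exact h1 ((Module.evalEquiv K R).symm.injective.eq_iff.mp h)
    have hg : ∀ (a : R) (χ : Module.Dual K I),
        g (χ ∘ₗ smulMap (K := K) I a) = a * g χ := by
      intro a χ
      apply dual_sep (K := K)
      intro ψ
      have h1 : ψ (a * g χ) = (ψ.comp (LinearMap.mulLeft K a)) (g χ) := by simp
      rw [key, h1, key]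
      have h2 : F (ψ.comp (LinearMap.mulLeft K a)) = a • F ψ := by
        apply Subtype.ext
        rw [hFcoe, hf a ψ]
        simp [smul_eq_mul, hFcoe]
      rw [h2]
      simp
    -- J := range of g
    refine ⟨{ carrier := Set.range g
              add_mem' := by rintro x y ⟨χ₁, rfl⟩ ⟨χ₂, rfl⟩; exact ⟨χ₁ + χ₂, map_add g χ₁ χ₂⟩
              zero_mem' := ⟨0, map_zero g⟩
              smul_mem' := by
                rintro a x ⟨χ, rfl⟩
                exact ⟨χ ∘ₗ smulMap (K := K) I a, by rw [hg]; simp [smul_eq_mul]⟩ }, ?_⟩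
    set J : Ideal R :=
      { carrier := Set.range g
        add_mem' := by rintro x y ⟨χ₁, rfl⟩ ⟨χ₂, rfl⟩; exact ⟨χ₁ + χ₂, map_add g χ₁ χ₂⟩
        zero_mem' := ⟨0, map_zero g⟩
        smul_mem' := by
          rintro a x ⟨χ, rfl⟩
          exact ⟨χ ∘ₗ smulMap (K := K) I a, by rw [hg]; simp [smul_eq_mul]⟩ } with hJdef
    set g' : Module.Dual K I →ₗ[K] J :=
      { toFun := fun χ => ⟨g χ, ⟨χ, rfl⟩⟩
        map_add' := fun χ₁ χ₂ => Subtype.ext (map_add g χ₁ χ₂)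
        map_smul' := fun c χ => Subtype.ext (map_smul g c χ) } with hg'def
    have hg'bij : Function.Bijective g' := by
      constructor
      · intro χ₁ χ₂ h
        exact hginj (congrArg Subtype.val h)
      · rintro ⟨x, χ, rfl⟩
        exact ⟨χ, rfl⟩
    set E := LinearEquiv.ofBijective g' hg'bij with hEdef
    refine ⟨E.symm, ?_⟩
    have hEcoe : ∀ y : J, g (E.symm y) = (y : R) := by
      intro y
      have := E.apply_symm_apply y
      rw [hEdef, LinearEquiv.ofBijective_apply] at this
      exact congrArg Subtype.val this
    intro a y x
    have h3 : g (E.symm (a • y)) = g ((E.symm y) ∘ₗ smulMap (K := K) I a) := by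
      rw [hEcoe, hg, hEcoe]
      simp [smul_eq_mul]
    have h4 := hginj h3
    rw [h4]
    simp
  · rintro ⟨J, e, he⟩
    haveI hIfd : FiniteDimensional K I :=
      FiniteDimensional.of_injective (idealVal (K := K) I) Subtype.val_injective
    haveI hJfd : FiniteDimensional K J :=
      FiniteDimensional.of_injective (idealVal (K := K) J) Subtype.val_injective
    set M : (R →ₗ[K] K) →ₗ[K] I :=
      (Module.evalEquiv K I).symm.toLinearMap ∘ₗ
        (e.symm.toLinearMap.dualMap ∘ₗ (idealVal (K := K) J).dualMap) with hMdef
    have key : ∀ (ψ : R →ₗ[K] K) (χ : Module.Dual K I),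
        χ (M ψ) = ψ ((e.symm χ : J) : R) := by
      intro ψ χ
      simp [hMdef, Module.apply_evalEquiv_symm_apply]
    have hesymm : ∀ (a : R) (χ : Module.Dual K I),
        e.symm (χ ∘ₗ smulMap (K := K) I a) = a • e.symm χ := by
      intro a χ
      have h1 : e (a • e.symm χ) = χ ∘ₗ smulMap (K := K) I a := by
        ext x
        rw [he a (e.symm χ) x]
        simp
      rw [← h1, e.symm_apply_apply]
    have hM : ∀ (a : R) (ψ : R →ₗ[K] K),
        M (ψ.comp (LinearMap.mulLeft K a)) = a • M ψ := by
      intro a ψ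
      apply dual_sep (K := K)
      intro χ
      rw [key]
      have h2 : χ (a • M ψ) = (χ ∘ₗ smulMap (K := K) I a) (M ψ) := by simp
      rw [h2, key, hesymm]
      simp [smul_eq_mul]
    refine ⟨(idealVal (K := K) I) ∘ₗ M, ?_, ?_⟩
    · intro a ψ
      have := hM a ψ
      simp only [LinearMap.comp_apply, idealVal_apply]
      rw [this]
      simp [smul_eq_mul]
    · have hMsurj : Function.Surjective M := by
        have h1 : Function.Surjective (idealVal (K := K) J).dualMap :=
          LinearMap.dualMap_surjective_of_injective Subtype.val_injective
        have h2 : Function.Surjective e.symm.toLinearMap.dualMap :=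
          LinearMap.dualMap_surjective_of_injective e.symm.injective
        rw [hMdef]
        simp only [LinearMap.coe_comp, LinearEquiv.coe_coe]
        exact ((Module.evalEquiv K I).symm.surjective.comp h2).comp h1
      have h3 : Set.range ((idealVal (K := K) I) ∘ₗ M) = Set.range (idealVal (K := K) I) := by
        rw [LinearMap.coe_comp]
        exact hMsurj.range_comp _
      rw [h3]
      ext x
      simp [idealVal]
end

section
/- Let R be a 0-dimensional local K-algebra and I ⊆ R a symmetric ideal (I ≅ Hom_K(I,K) as R-modules). Then I is a τ-ideal, i.e., there exists a surjective R-module homomorphism ω_R → I. -/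
/-- If `I` is a symmetric ideal of a 0-dimensional local `K`-algebra `R`
(i.e. `I ≅ Hom_K(I,K)` as `R`-modules), then `I` is a τ-ideal: there is a surjective
`R`-module homomorphism `ω_R → I`. -/
theorem stmt4 (K R : Type*) [Field K] [CommRing R] [Algebra K R]
    [IsLocalRing R] [FiniteDimensional K R] (I : Ideal R)
    (hsym : ∃ e : I ≃ₗ[K] (I →ₗ[K] K),
      ∀ (a : R) (x y : I), e (a • x) y = e x (a • y)) :
    ∃ f : (R →ₗ[K] K) →ₗ[K] R, RLinearDualMap K R f ∧ Set.range f = (I : Set R) := by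
  obtain ⟨e, he⟩ := hsym
  let r : (R →ₗ[K] K) →ₗ[K] (I →ₗ[K] K) :=
    { toFun := fun ψ => ψ.comp (I.restrictScalars K).subtype
      map_add' := fun _ _ => rfl
      map_smul' := fun _ _ => rfl }
  refine ⟨(I.restrictScalars K).subtype ∘ₗ e.symm.toLinearMap ∘ₗ r, ?_, ?_⟩
  · intro a ψ
    simp only [LinearMap.comp_apply, LinearEquiv.coe_coe]
    have h1 : e.symm (r (ψ.comp (LinearMap.mulLeft K a))) = a • e.symm (r ψ) := by
      apply e.injective
      rw [e.apply_symm_apply]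
      ext y
      rw [he a (e.symm (r ψ)) y, e.apply_symm_apply]
      rfl
    erw [h1]
    rfl
  · ext x
    simp only [Set.mem_range, SetLike.mem_coe, LinearMap.comp_apply, LinearEquiv.coe_coe,
      Submodule.coe_subtype]
    constructor
    · rintro ⟨ψ, rfl⟩
      exact (e.symm (r ψ)).2
    · intro hx
      obtain ⟨ψ, hψ⟩ := LinearMap.exists_extend (p := I.restrictScalars K) (e ⟨x, hx⟩)
      refine ⟨ψ, ?_⟩
      have h2 : r ψ = e ⟨x, hx⟩ := hψ
      change ((e.symm (r ψ) : I) : R) = x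
      rw [h2, e.symm_apply_apply]
end

section
/- Let R be a 0-dimensional local K-algebra. Then R is of Teter type (there is a surjective R-module homomorphism ω_R → tr(ω_R)) if and only if tr(ω_R) is a symmetric ideal, i.e., tr(ω_R) ≅ Hom_K(tr(ω_R), K) as R-modules. -/
set_option linter.unusedSectionVars false

section Aux

variable (K R : Type*) [Field K] [CommRing R] [Algebra K R] [FiniteDimensional K R]

/-- The inclusion of the trace ideal, as a `K`-linear map. -/
noncomputable def tIncl : (traceIdeal K R) →ₗ[K] R :=
  ((traceIdeal K R).subtype).restrictScalars K

@[simp] lemma tIncl_apply (x : traceIdeal K R) : tIncl K R x = (x : R) := rfl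

lemma tIncl_injective : Function.Injective (tIncl K R) := Subtype.coe_injective

/-- Restriction of functionals to the trace ideal. -/
noncomputable def tRes : Module.Dual K R →ₗ[K] Module.Dual K (traceIdeal K R) :=
  (tIncl K R).dualMap

@[simp] lemma tRes_apply (ψ : Module.Dual K R) (x : traceIdeal K R) :
    tRes K R ψ x = ψ (x : R) := rfl

lemma tRes_surjective : Function.Surjective (tRes K R) :=
  LinearMap.dualMap_surjective_of_injective (tIncl_injective K R)

end Aux

section Mpr

variable {K R : Type*} [Field K] [CommRing R] [Algebra K R] [FiniteDimensional K R]

lemma mpr_dir (e : (traceIdeal K R) ≃ₗ[K] ((traceIdeal K R) →ₗ[K] K))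
    (he : ∀ (a : R) (x y : traceIdeal K R), e (a • x) y = e x (a • y)) :
    ∃ f : (R →ₗ[K] K) →ₗ[K] R, RLinearDualMap K R f ∧
      Set.range f = (traceIdeal K R : Set R) := by
  refine ⟨(tIncl K R) ∘ₗ (e.symm : ((traceIdeal K R) →ₗ[K] K) →ₗ[K] traceIdeal K R)
      ∘ₗ tRes K R, ?_, ?_⟩
  · intro a ψ
    have key : e.symm (tRes K R (ψ.comp (LinearMap.mulLeft K a)))
        = a • e.symm (tRes K R ψ) := by
      apply e.injective
      rw [e.apply_symm_apply]
      ext y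
      rw [he a (e.symm (tRes K R ψ)) y, e.apply_symm_apply]
      simp [smul_eq_mul]
    simp only [LinearMap.comp_apply, LinearEquiv.coe_coe, tIncl_apply]
    rw [key, Submodule.coe_smul, smul_eq_mul]
  · ext x
    constructor
    · rintro ⟨ψ, rfl⟩
      exact Subtype.coe_prop _
    · intro hx
      obtain ⟨ψ, hψ⟩ := tRes_surjective K R (e ⟨x, hx⟩)
      exact ⟨ψ, by simp [hψ]⟩

end Mpr
section Mp

open Module LinearMap

variable {K R : Type*} [Field K] [CommRing R] [Algebra K R] [FiniteDimensional K R]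

lemma mp_dir (f : (R →ₗ[K] K) →ₗ[K] R) (hf : RLinearDualMap K R f)
    (hr : Set.range f = (traceIdeal K R : Set R)) :
    ∃ e : (traceIdeal K R) ≃ₗ[K] ((traceIdeal K R) →ₗ[K] K),
      ∀ (a : R) (x y : traceIdeal K R), e (a • x) y = e x (a • y) := by
  classical
  set g : (R →ₗ[K] K) →ₗ[K] R :=
    (((Module.evalEquiv K R).symm : Module.Dual K (Module.Dual K R) →ₗ[K] R)) ∘ₗ f.dualMap
    with hg_def
  have hP : ∀ (χ ψ : R →ₗ[K] K), ψ (g χ) = χ (f ψ) := by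
    intro χ ψ
    simp [hg_def]
  have hg : RLinearDualMap K R g := by
    intro a χ
    rw [← sub_eq_zero, ← Module.forall_dual_apply_eq_zero_iff K
      (g (χ.comp (LinearMap.mulLeft K a)) - a * g χ)]
    intro ψ
    rw [map_sub, sub_eq_zero, hP]
    have h2 : (ψ.comp (LinearMap.mulLeft K a)) (g χ) = χ (f (ψ.comp (LinearMap.mulLeft K a))) :=
      hP χ _
    rw [hf a ψ] at h2
    calc (χ.comp (LinearMap.mulLeft K a)) (f ψ) = χ (a * f ψ) := rfl
    _ = (ψ.comp (LinearMap.mulLeft K a)) (g χ) := h2.symm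
    _ = ψ (a * g χ) := rfl
  have hker : ∀ χ : R →ₗ[K] K, g χ = 0 ↔ tRes K R χ = 0 := by
    intro χ
    constructor
    · intro h
      ext y
      obtain ⟨ψ, hψ⟩ : (y : R) ∈ Set.range f := hr ▸ y.2
      rw [tRes_apply, ← hψ, ← hP, h]
      simp
    · intro h
      rw [← Module.forall_dual_apply_eq_zero_iff K (g χ)]
      intro ψ
      have hmem : f ψ ∈ traceIdeal K R := by
        rw [← SetLike.mem_coe, ← hr]; exact Set.mem_range_self ψ
      have := congrArg (fun φ => φ ⟨f ψ, hmem⟩) h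
      simpa [hP] using this
  have hkk : LinearMap.ker g = LinearMap.ker (tRes K R) := by
    ext χ; simp [LinearMap.mem_ker, hker]
  have hle : LinearMap.range g ≤ Submodule.restrictScalars K (traceIdeal K R) := by
    rintro x ⟨χ, rfl⟩
    exact Ideal.subset_span ⟨g, hg, χ, rfl⟩
  have hfr : Module.finrank K (LinearMap.range g)
      = Module.finrank K (Submodule.restrictScalars K (traceIdeal K R)) := by
    rw [← (LinearMap.quotKerEquivRange g).finrank_eq,
      (Submodule.quotEquivOfEq _ _ hkk).finrank_eq,
      (LinearMap.quotKerEquivOfSurjective (tRes K R) (tRes_surjective K R)).finrank_eq,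
      Subspace.dual_finrank_eq,
      ((Submodule.restrictScalarsEquiv K R R (traceIdeal K R)).restrictScalars K).finrank_eq]
  have hrg : LinearMap.range g = Submodule.restrictScalars K (traceIdeal K R) :=
    Submodule.eq_of_le_of_finrank_eq hle hfr
  let E1 : (traceIdeal K R) ≃ₗ[K] (Submodule.restrictScalars K (traceIdeal K R)) :=
    ((Submodule.restrictScalarsEquiv K R R (traceIdeal K R)).restrictScalars K).symm
  let E2 : (Submodule.restrictScalars K (traceIdeal K R)) ≃ₗ[K] LinearMap.range g :=
    LinearEquiv.ofEq _ _ hrg.symm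
  let E3 : (LinearMap.range g : Submodule K R) ≃ₗ[K] ((R →ₗ[K] K) ⧸ LinearMap.ker g) :=
    (LinearMap.quotKerEquivRange g).symm
  let E4 : ((R →ₗ[K] K) ⧸ LinearMap.ker g) ≃ₗ[K] ((R →ₗ[K] K) ⧸ LinearMap.ker (tRes K R)) :=
    Submodule.quotEquivOfEq _ _ hkk
  let E5 : ((R →ₗ[K] K) ⧸ LinearMap.ker (tRes K R)) ≃ₗ[K] Module.Dual K (traceIdeal K R) :=
    LinearMap.quotKerEquivOfSurjective (tRes K R) (tRes_surjective K R)
  let e : (traceIdeal K R) ≃ₗ[K] ((traceIdeal K R) →ₗ[K] K) :=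
    E1 ≪≫ₗ E2 ≪≫ₗ E3 ≪≫ₗ E4 ≪≫ₗ E5
  have key : ∀ (χ : R →ₗ[K] K) (x : traceIdeal K R), g χ = (x : R) →
      ∀ y : traceIdeal K R, e x y = χ (y : R) := by
    intro χ x hx y
    have h2 : E2 (E1 x) = ⟨g χ, ⟨χ, rfl⟩⟩ := Subtype.ext hx.symm
    have h3 : E3 (E2 (E1 x)) = Submodule.Quotient.mk χ := by
      rw [h2, LinearEquiv.symm_apply_eq]
      refine Subtype.ext ?_
      rw [LinearMap.quotKerEquivRange_apply_mk]
    have h4 : e x = E5 (Submodule.Quotient.mk χ) := by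
      simp only [e, LinearEquiv.trans_apply, h3]
      rw [Submodule.quotEquivOfEq_mk]
    rw [h4]
    have h5 : E5 (Submodule.Quotient.mk χ) = tRes K R χ := rfl
    rw [h5, tRes_apply]
  refine ⟨e, ?_⟩
  intro a x y
  obtain ⟨χ, hχ⟩ : (↑x : R) ∈ LinearMap.range g := by rw [hrg]; exact x.2
  have h1 : g (χ.comp (LinearMap.mulLeft K a)) = ((a • x : traceIdeal K R) : R) := by
    rw [hg a χ, hχ]; simp [smul_eq_mul]
  rw [key _ _ h1 y, key _ _ hχ (a • y)]
  simp [smul_eq_mul]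

end Mp

/-- A 0-dimensional local `K`-algebra `R` is of Teter type (some `R`-homomorphism
`ω_R → R` has image exactly `tr(ω_R)`) iff the ideal `tr(ω_R)` is symmetric, i.e.
`tr(ω_R) ≅ Hom_K(tr(ω_R),K)` as `R`-modules. -/
theorem stmt5 (K R : Type*) [Field K] [CommRing R] [Algebra K R]
    [IsLocalRing R] [FiniteDimensional K R] :
    (∃ f : (R →ₗ[K] K) →ₗ[K] R, RLinearDualMap K R f ∧
        Set.range f = (traceIdeal K R : Set R)) ↔
    (∃ e : (traceIdeal K R) ≃ₗ[K] ((traceIdeal K R) →ₗ[K] K),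
      ∀ (a : R) (x y : traceIdeal K R), e (a • x) y = e x (a • y)) := by
  constructor
  · rintro ⟨f, hf, hr⟩
    exact mp_dir f hf hr
  · rintro ⟨e, he⟩
    exact mpr_dir e he
end

section
/- Let R be a 0-dimensional monomial K-algebra with divisor poset P. If poset ideals I and J of P are companions (i.e., there is a multigraded isomorphism J* → I), then the poset ideal I ∪ J is symmetric. -/
/-- Monomials are identified with their exponent vectors in `Fin n → ℕ`
(multiplication of monomials = addition of exponent vectors).  A divisor poset (the set of
monomials outside a 0-dimensional monomial ideal, ordered by reverse divisibility) is a
finite set of exponent vectors closed under taking divisors. -/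
def IsDivisorPoset {n : ℕ} (P : Set (Fin n → ℕ)) : Prop :=
  P.Finite ∧ ∀ u ∈ P, ∀ v : Fin n → ℕ, v ≤ u → v ∈ P

/-- A poset ideal of the divisor poset `P` (downward closed for the order
`u ⪯ v ↔ v ∣ u`, i.e. upward closed for the pointwise order on exponents). -/
def IsPosetIdealOf {n : ℕ} (P I : Set (Fin n → ℕ)) : Prop :=
  I ⊆ P ∧ ∀ u ∈ I, ∀ v ∈ P, u ≤ v → v ∈ I

/-- `J` is a companion of `I`: there is a multigraded isomorphism `J* → I`, i.e. a bijection
`f : J → I` such that the monomial `f v · v` (the sum of exponent vectors) is a constant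
monomial `m`. -/
def AreCompanions {n : ℕ} (I J : Set (Fin n → ℕ)) : Prop :=
  ∃ (m : Fin n → ℕ) (f : (Fin n → ℕ) → (Fin n → ℕ)),
    Set.BijOn f J I ∧ ∀ v ∈ J, f v + v = m

/-- `I` is symmetric if `I` is a companion of itself. -/
def IsSymmetricIdeal {n : ℕ} (I : Set (Fin n → ℕ)) : Prop := AreCompanions I I

/-- `Gen(I)`: the maximal elements of `I` in the order `⪯` (reverse divisibility), i.e. the
minimal exponent vectors: the minimal monomial generators. -/
def genSet {n : ℕ} (I : Set (Fin n → ℕ)) : Set (Fin n → ℕ) :=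
  {u ∈ I | ∀ v ∈ I, v ≤ u → v = u}

/-- `Soc(I)`: the minimal elements of `I` in the order `⪯`, i.e. the maximal exponent
vectors: the socle monomials. -/
def socSet {n : ℕ} (I : Set (Fin n → ℕ)) : Set (Fin n → ℕ) :=
  {u ∈ I | ∀ v ∈ I, u ≤ v → v = u}

/-- If poset ideals `I` and `J` of the divisor poset `P` of a 0-dimensional monomial
`K`-algebra are companions, then the poset ideal `I ∪ J` is symmetric. -/
theorem stmt6 {n : ℕ} (P I J : Set (Fin n → ℕ)) (hP : IsDivisorPoset P)
    (hI : IsPosetIdealOf P I) (hJ : IsPosetIdealOf P J)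
    (hcomp : AreCompanions I J) :
    IsSymmetricIdeal (I ∪ J) := by
  obtain ⟨m, f, hbij, hm⟩ := hcomp
  have hle : ∀ v ∈ I ∪ J, ∀ i, v i ≤ m i := by
    rintro v (hv | hv)
    · obtain ⟨w, hw, rfl⟩ := hbij.surjOn hv
      intro i
      have := congrFun (hm w hw) i
      simp only [Pi.add_apply] at this
      generalize f w i = a at this ⊢
      omega
    · intro i
      have := congrFun (hm v hv) i
      simp only [Pi.add_apply] at this
      generalize f v i = a at this
      omega
  have hmaps : ∀ v ∈ I ∪ J, m - v ∈ I ∪ J := by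
    rintro v (hv | hv)
    · obtain ⟨w, hw, rfl⟩ := hbij.surjOn hv
      have hfw : m - f w = w := by
        funext i
        have := congrFun (hm w hw) i
        simp only [Pi.add_apply, Pi.sub_apply] at this ⊢
        generalize f w i = a at this ⊢
        omega
      rw [hfw]; exact Or.inr hw
    · have hfv : m - v = f v := by
        funext i
        have := congrFun (hm v hv) i
        simp only [Pi.add_apply, Pi.sub_apply] at this ⊢
        generalize f v i = a at this ⊢
        omega
      rw [hfv]; exact Or.inl (hbij.mapsTo hv)
  refine ⟨m, fun v => m - v, ⟨hmaps, ?_, ?_⟩, ?_⟩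
  · intro u hu v hv huv
    funext i
    have h1 := hle u hu i
    have h2 := hle v hv i
    have h3 := congrFun huv i
    simp only [Pi.sub_apply] at h3
    omega
  · intro u hu
    refine ⟨m - u, hmaps u hu, ?_⟩
    funext i
    have h1 := hle u hu i
    simp only [Pi.sub_apply]
    omega
  · intro v hv
    funext i
    have h1 := hle v hv i
    simp only [Pi.add_apply, Pi.sub_apply]
    omega
end

section
/- Let P be the divisor poset of a 0-dimensional monomial K-algebra, and let I and J be poset ideals of P with Gen(I) = {a_1,...,a_k}, Soc(I) = {b_1,...,b_l}, Gen(J) = {c_1,...,c_{l'}}, Soc(J) = {d_1,...,d_{k'}}. Then I and J are companions if and only if k = k', l = l', and after relabelling the elements of Gen(J) and Soc(J), there is a single monomial m with a_i·d_i = m for all 1 ≤ i ≤ k and b_j·c_j = m for all 1 ≤ j ≤ l. -/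
section Aux

variable {n : ℕ}

private lemma pi_add_eq_facts {u w m : Fin n → ℕ} (h : u + w = m) :
    u ≤ m ∧ w ≤ m ∧ m - u = w ∧ m - w = u := by
  have h' : ∀ i, u i + w i = m i := fun i => congrFun h i
  refine ⟨Pi.le_def.mpr fun i => ?_, Pi.le_def.mpr fun i => ?_,
    funext fun i => ?_, funext fun i => ?_⟩
  · show u i ≤ m i; have := h' i; omega
  · show w i ≤ m i; have := h' i; omega
  · show m i - u i = w i; have := h' i; omega
  · show m i - w i = u i; have := h' i; omega

private lemma pi_sub_add {v m : Fin n → ℕ} (h : v ≤ m) : m - v + v = m := by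
  funext i; have := Pi.le_def.mp h i; show m i - v i + v i = m i; omega

private lemma pi_add_sub {v m : Fin n → ℕ} (h : v ≤ m) : v + (m - v) = m := by
  funext i; have := Pi.le_def.mp h i; show v i + (m i - v i) = m i; omega

private lemma pi_sub_sub {v m : Fin n → ℕ} (h : v ≤ m) : m - (m - v) = v := by
  funext i; have := Pi.le_def.mp h i; show m i - (m i - v i) = v i; omega

private lemma pi_sub_le_sub {m v w : Fin n → ℕ} (h : v ≤ w) : m - w ≤ m - v :=
  Pi.le_def.mpr fun i => by
    have := Pi.le_def.mp h i; show m i - w i ≤ m i - v i; omega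

private lemma pi_le_of_sub_le_sub {m v w : Fin n → ℕ} (hv : v ≤ m) (h : m - w ≤ m - v) :
    v ≤ w := Pi.le_def.mpr fun i => by
  have h1 : m i - w i ≤ m i - v i := Pi.le_def.mp h i
  have := Pi.le_def.mp hv i; omega

private lemma exists_soc_above {S : Set (Fin n → ℕ)} (hS : S.Finite) {v : Fin n → ℕ}
    (hv : v ∈ S) : ∃ w ∈ socSet S, v ≤ w := by
  obtain ⟨w, hw, hmax⟩ := Set.Finite.exists_maximalFor id {x ∈ S | v ≤ x}
    (hS.subset (fun x hx => hx.1)) ⟨v, hv, le_refl v⟩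
  exact ⟨w, ⟨hw.1, fun x hx hwx => le_antisymm (hmax (j := x) ⟨hx, hw.2.trans hwx⟩ hwx) hwx⟩, hw.2⟩

private lemma exists_gen_below {S : Set (Fin n → ℕ)} (hS : S.Finite) {v : Fin n → ℕ}
    (hv : v ∈ S) : ∃ w ∈ genSet S, w ≤ v := by
  obtain ⟨w, hw, hmin⟩ := Set.Finite.exists_minimalFor id {x ∈ S | x ≤ v}
    (hS.subset (fun x hx => hx.1)) ⟨v, hv, le_refl v⟩
  exact ⟨w, ⟨hw.1, fun x hx hxw => le_antisymm hxw (hmin (j := x) ⟨hx, hxw.trans hw.2⟩ hxw)⟩, hw.2⟩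

end Aux

/-- Poset ideals `I` and `J` of a divisor poset `P` are companions iff (after relabelling)
there is a single monomial `m` with `a·d = m` for a bijective pairing of `Gen(I)` with
`Soc(J)` and `b·c = m` for a bijective pairing of `Soc(I)` with `Gen(J)`. -/
theorem stmt7 {n : ℕ} (P I J : Set (Fin n → ℕ)) (hP : IsDivisorPoset P)
    (hI : IsPosetIdealOf P I) (hJ : IsPosetIdealOf P J) :
    AreCompanions I J ↔
      ∃ m : Fin n → ℕ,
        (∃ g : (Fin n → ℕ) → (Fin n → ℕ),
          Set.BijOn g (genSet I) (socSet J) ∧ ∀ u ∈ genSet I, u + g u = m) ∧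
        (∃ h : (Fin n → ℕ) → (Fin n → ℕ),
          Set.BijOn h (socSet I) (genSet J) ∧ ∀ u ∈ socSet I, u + h u = m) := by
  constructor
  · rintro ⟨m, f, hbij, hf⟩
    -- basic facts
    have hJle : ∀ v ∈ J, v ≤ m := fun v hv => (pi_add_eq_facts (hf v hv)).2.1
    have hfv : ∀ v ∈ J, f v = m - v := fun v hv => (pi_add_eq_facts (hf v hv)).2.2.2.symm
    have hIfacts : ∀ u ∈ I, u ≤ m ∧ m - u ∈ J ∧ f (m - u) = u := by
      intro u hu
      obtain ⟨v, hv, rfl⟩ := hbij.surjOn hu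
      have h := pi_add_eq_facts (hf v hv)
      refine ⟨h.1, ?_, ?_⟩
      · rw [h.2.2.1]; exact hv
      · rw [h.2.2.1]
    refine ⟨m, ⟨HSub.hSub m, ⟨?_, ?_, ?_⟩, ?_⟩, ⟨HSub.hSub m, ⟨?_, ?_, ?_⟩, ?_⟩⟩
    · -- MapsTo : genSet I → socSet J
      intro u hu
      have huI := hu.1
      refine ⟨(hIfacts u huI).2.1, ?_⟩
      intro w hw hle
      have hfw : f w ∈ I := hbij.mapsTo hw
      have h1 : m - w ≤ u := by
        have : m - w ≤ m - (m - u) := pi_sub_le_sub hle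
        rwa [pi_sub_sub (hIfacts u huI).1] at this
      have h2 : m - w = u := hu.2 (m - w) (by rw [← hfv w hw]; exact hfw) h1
      have : m - (m - w) = w := pi_sub_sub (hJle w hw)
      rw [h2] at this
      rw [← this]
    · -- InjOn on genSet I
      intro u hu u' hu' heq
      have h1 := pi_sub_sub (hIfacts u hu.1).1
      have h2 := pi_sub_sub (hIfacts u' hu'.1).1
      rw [← h1, heq, h2]
    · -- SurjOn onto socSet J
      intro v hv
      have hvJ := hv.1
      refine ⟨m - v, ⟨?_, ?_⟩, pi_sub_sub (hJle v hvJ)⟩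
      · rw [← hfv v hvJ]; exact hbij.mapsTo hvJ
      · intro u' hu' hle
        obtain ⟨w, hw, rfl⟩ := hbij.surjOn hu'
        have : v ≤ w := by
          apply pi_le_of_sub_le_sub (hJle v hvJ)
          rwa [hfv w hw] at hle
        rw [hv.2 w hw this, hfv v hvJ]
    · intro u hu
      exact pi_add_sub (hIfacts u hu.1).1
    · -- MapsTo : socSet I → genSet J
      intro u hu
      have huI := hu.1
      refine ⟨(hIfacts u huI).2.1, ?_⟩
      intro w hw hle
      have h1 : u ≤ m - w := by
        have : m - (m - u) ≤ m - w := pi_sub_le_sub hle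
        rwa [pi_sub_sub (hIfacts u huI).1] at this
      have h2 : m - w = u := hu.2 (m - w) (by rw [← hfv w hw]; exact hbij.mapsTo hw) h1
      have : m - (m - w) = w := pi_sub_sub (hJle w hw)
      rw [h2] at this
      rw [← this]
    · -- InjOn on socSet I
      intro u hu u' hu' heq
      have h1 := pi_sub_sub (hIfacts u hu.1).1
      have h2 := pi_sub_sub (hIfacts u' hu'.1).1
      rw [← h1, heq, h2]
    · -- SurjOn onto genSet J
      intro v hv
      have hvJ := hv.1
      refine ⟨m - v, ⟨?_, ?_⟩, pi_sub_sub (hJle v hvJ)⟩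
      · rw [← hfv v hvJ]; exact hbij.mapsTo hvJ
      · intro u' hu' hle
        obtain ⟨w, hw, rfl⟩ := hbij.surjOn hu'
        rw [hfv w hw] at hle
        have hwv : w ≤ v := pi_le_of_sub_le_sub (hJle w hw) hle
        rw [hv.2 w hw hwv, hfv v hvJ]
    · intro u hu
      exact pi_add_sub (hIfacts u hu.1).1
  · rintro ⟨m, ⟨g, hg, hgm⟩, ⟨h, hh, hhm⟩⟩
    have hIfin : I.Finite := hP.1.subset hI.1
    have hJfin : J.Finite := hP.1.subset hJ.1
    -- every element of J is ≤ m, and m - v ∈ I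
    have keyJ : ∀ v ∈ J, v ≤ m ∧ m - v ∈ I := by
      intro v hv
      obtain ⟨w, hwsoc, hvw⟩ := exists_soc_above hJfin hv
      obtain ⟨u, hugen, rfl⟩ := hg.surjOn hwsoc
      have hfac := pi_add_eq_facts (hgm u hugen)
      have hvm : v ≤ m := hvw.trans hfac.2.1
      obtain ⟨g', hg'gen, hg'v⟩ := exists_gen_below hJfin hv
      obtain ⟨u', hu'soc, rfl⟩ := hh.surjOn hg'gen
      have hfac' := pi_add_eq_facts (hhm u' hu'soc)
      -- m - v ≤ m - h u' = u' ∈ P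
      have h1 : m - v ≤ u' := by
        have := pi_sub_le_sub (m := m) hg'v
        rwa [hfac'.2.2.2] at this
      have hmvP : m - v ∈ P := hP.2 u' (hI.1 hu'soc.1) _ h1
      -- u ≤ m - v with u ∈ I
      have h2 : u ≤ m - v := by
        have := pi_sub_le_sub (m := m) hvw
        rwa [hfac.2.2.2] at this
      exact ⟨hvm, hI.2 u hugen.1 _ hmvP h2⟩
    have keyI : ∀ u ∈ I, u ≤ m ∧ m - u ∈ J := by
      intro u hu
      obtain ⟨u₁, hu₁soc, huu₁⟩ := exists_soc_above hIfin hu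
      have hfac := pi_add_eq_facts (hhm u₁ hu₁soc)
      have hum : u ≤ m := huu₁.trans hfac.1
      obtain ⟨u₀, hu₀gen, hu₀u⟩ := exists_gen_below hIfin hu
      have hfac' := pi_add_eq_facts (hgm u₀ hu₀gen)
      -- m - u ≤ g u₀ ∈ P
      have h1 : m - u ≤ g u₀ := by
        have := pi_sub_le_sub (m := m) hu₀u
        rwa [hfac'.2.2.1] at this
      have hmuP : m - u ∈ P := hP.2 (g u₀) (hJ.1 (hg.mapsTo hu₀gen).1) _ h1
      -- h u₁ ≤ m - u with h u₁ ∈ J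
      have h2 : h u₁ ≤ m - u := by
        have := pi_sub_le_sub (m := m) huu₁
        rwa [hfac.2.2.1] at this
      exact ⟨hum, hJ.2 (h u₁) (hh.mapsTo hu₁soc).1 _ hmuP h2⟩
    refine ⟨m, HSub.hSub m, ⟨?_, ?_, ?_⟩, ?_⟩
    · intro v hv; exact (keyJ v hv).2
    · intro v hv v' hv' heq
      rw [← pi_sub_sub (keyJ v hv).1, heq, pi_sub_sub (keyJ v' hv').1]
    · intro u hu
      exact ⟨m - u, (keyI u hu).2, pi_sub_sub (keyI u hu).1⟩
    · intro v hv
      exact pi_sub_add (keyJ v hv).1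
end

section
/- Let P be the divisor poset of a 0-dimensional monomial K-algebra and I a poset ideal of P with Gen(I) = {a_1,...,a_k} and Soc(I) = {b_1,...,b_l}. Then I is symmetric if and only if k = l and after relabelling of Soc(I), a_i·b_i = a_j·b_j for all 1 ≤ i, j ≤ k. -/
/-- A poset ideal `I` of a divisor poset `P` is symmetric iff (after relabelling) there is a
bijective pairing of `Gen(I)` with `Soc(I)` for which the product `a_i·b_i` is a constant
monomial, i.e. `a_i·b_i = a_j·b_j` for all `i, j`. -/
theorem stmt8 {n : ℕ} (P I : Set (Fin n → ℕ)) (hP : IsDivisorPoset P)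
    (hI : IsPosetIdealOf P I) :
    IsSymmetricIdeal I ↔
      ∃ (m : Fin n → ℕ) (g : (Fin n → ℕ) → (Fin n → ℕ)),
        Set.BijOn g (genSet I) (socSet I) ∧ ∀ u ∈ genSet I, u + g u = m := by
  obtain ⟨hPfin, hPdown⟩ := hP
  obtain ⟨hIP, hIup⟩ := hI
  have hIfin : I.Finite := hPfin.subset hIP
  have hgenI : genSet I ⊆ I := fun u hu => hu.1
  have hsocI : socSet I ⊆ I := fun u hu => hu.1
  constructor
  · rintro ⟨m, f, ⟨hmaps, hinj, hsurj⟩, hsum⟩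
    have hcomp : ∀ u ∈ I, ∀ w ∈ I, f u ≤ f w ↔ w ≤ u := by
      intro u hu w hw
      constructor
      · intro h i
        have h1 : f u i + u i = m i := congrFun (hsum u hu) i
        have h2 : f w i + w i = m i := congrFun (hsum w hw) i
        have h3 : f u i ≤ f w i := h i
        show w i ≤ u i
        omega
      · intro h i
        have h1 : f u i + u i = m i := congrFun (hsum u hu) i
        have h2 : f w i + w i = m i := congrFun (hsum w hw) i
        have h3 : w i ≤ u i := h i
        show f u i ≤ f w i
        omega
    refine ⟨m, f, ⟨?_, hinj.mono hgenI, ?_⟩, fun u hu => by rw [add_comm]; exact hsum u (hgenI hu)⟩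
    · intro u hu
      refine ⟨hmaps (hgenI hu), ?_⟩
      intro v hv hle
      obtain ⟨w, hw, rfl⟩ := hsurj hv
      have : w ≤ u := (hcomp u (hgenI hu) w hw).1 hle
      rw [hu.2 w hw this]
    · intro b hb
      obtain ⟨u, hu, rfl⟩ := hsurj (hsocI hb)
      refine ⟨u, ⟨hu, ?_⟩, rfl⟩
      intro w hw hle
      have h1 : f u ≤ f w := (hcomp u hu w hw).2 hle
      have h2 : f w = f u := hb.2 (f w) (hmaps hw) h1
      exact hinj hw hu h2
  · rintro ⟨m, g, ⟨hmaps, hinj, hsurj⟩, hsum⟩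
    -- every element of I is bounded above by m
    have hle_m : ∀ v ∈ I, v ≤ m := by
      intro v hv
      obtain ⟨b, hvb, hbmax⟩ := hIfin.exists_le_maximal hv
      have hbsoc : b ∈ socSet I := ⟨hbmax.1, fun w hw hle => le_antisymm (hbmax.2 hw hle) hle⟩
      obtain ⟨u, hu, rfl⟩ := hsurj hbsoc
      calc v ≤ g u := hvb
        _ ≤ u + g u := le_add_self
        _ = m := hsum u hu
    have hmemsub : ∀ v ∈ I, m - v ∈ I := by
      intro v hv
      obtain ⟨u, huv, humin⟩ := hIfin.exists_le_minimal hv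
      have hugen : u ∈ genSet I := ⟨humin.1, fun w hw hle => le_antisymm hle (humin.2 hw hle)⟩
      have hmP : m - v ∈ P := by
        have hsub : m - v ≤ g u := by
          intro i
          have h1 : u i + g u i = m i := congrFun (hsum u hugen) i
          have h2 : u i ≤ v i := huv i
          show m i - v i ≤ g u i
          omega
        exact hPdown (g u) (hIP (hsocI (hmaps hugen))) _ hsub
      -- find an element of I below m - v
      obtain ⟨b, hvb, hbmax⟩ := hIfin.exists_le_maximal hv
      have hbsoc : b ∈ socSet I := ⟨hbmax.1, fun w hw hle => le_antisymm (hbmax.2 hw hle) hle⟩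
      obtain ⟨u', hu', hgu'⟩ := hsurj hbsoc
      have hu'le : u' ≤ m - v := by
        intro i
        have h1 : u' i + g u' i = m i := congrFun (hsum u' hu') i
        have h2 : v i ≤ b i := hvb i
        have h4 : g u' i = b i := congrFun hgu' i
        show u' i ≤ m i - v i
        omega
      exact hIup u' (hgenI hu') (m - v) hmP hu'le
    refine ⟨m, fun v => m - v, ⟨fun v hv => hmemsub v hv, ?_, ?_⟩, ?_⟩
    · intro u hu v hv h
      funext i
      have h1 : u i ≤ m i := hle_m u hu i
      have h2 : v i ≤ m i := hle_m v hv i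
      have h3 : m i - u i = m i - v i := congrFun h i
      omega
    · intro v hv
      refine ⟨m - v, hmemsub v hv, ?_⟩
      funext i
      have h1 : v i ≤ m i := hle_m v hv i
      show m i - (m i - v i) = v i
      omega
    · intro v hv
      funext i
      have h1 : v i ≤ m i := hle_m v hv i
      show (m i - v i) + v i = m i
      omega
end

section
/- Let S = K[x_1,...,x_n], n ≥ 2, and R = S/(x_1^{a_1},...,x_n^{a_n}, w) where w = x_1^{b_1}···x_n^{b_n} with 0 ≤ b_i < a_i for all i and b_i > 0 for at least two indices i. Then tr(ω_R) is the ideal of R generated by the monomials x_i^{a_i − b_i} for those i with b_i > 0, together with the monomials w/x_i^{b_i} for those i with b_i > 0. -/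
/-- The almost complete intersection monomial ideal
`(x_1^{a_1}, …, x_n^{a_n}, x_1^{b_1}⋯x_n^{b_n})`. -/
noncomputable def aciIdeal (K : Type*) [Field K] (n : ℕ) (a b : Fin n → ℕ) :
    Ideal (MvPolynomial (Fin n) K) :=
  Ideal.span (Set.range (fun i => MvPolynomial.X i ^ a i) ∪
    {∏ i, MvPolynomial.X i ^ b i})

set_option maxHeartbeats 1000000
set_option synthInstance.maxHeartbeats 400000

namespace ACIP
open MvPolynomial

variable {K : Type*} [Field K] {n : ℕ}

/-- The monomial with exponent vector `v`. -/
noncomputable def mon (v : Fin n → ℕ) : MvPolynomial (Fin n) K := ∏ j, X j ^ v j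

/-- exponent vector as a finsupp -/
noncomputable def F (v : Fin n → ℕ) : Fin n →₀ ℕ := Finsupp.equivFunOnFinite.symm v

@[simp] lemma F_apply (v : Fin n → ℕ) (j : Fin n) : F v j = v j := rfl

lemma F_coe (d : Fin n →₀ ℕ) : F (⇑d) = d := Finsupp.equivFunOnFinite_symm_coe d

lemma F_inj : Function.Injective (F (n := n)) := Finsupp.equivFunOnFinite.symm.injective

lemma mon_eq_monomial (v : Fin n → ℕ) : (mon v : MvPolynomial (Fin n) K) = monomial (F v) 1 := by
  rw [← prod_X_pow_eq_monomial]
  rw [mon]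
  refine (Finset.prod_subset (Finset.subset_univ _) ?_).symm
  intro j _ hj
  have : F v j = 0 := by simpa using hj
  simp_all

lemma mon_coe (d : Fin n →₀ ℕ) : (mon ⇑d : MvPolynomial (Fin n) K) = monomial d 1 := by
  rw [mon_eq_monomial, F_coe]

lemma mon_add (v w : Fin n → ℕ) : (mon (v + w) : MvPolynomial (Fin n) K) = mon v * mon w := by
  simp [mon, pow_add, Finset.prod_mul_distrib]

lemma mon_single (j : Fin n) (t : ℕ) :
    (mon (fun i => if i = j then t else 0) : MvPolynomial (Fin n) K) = X j ^ t := by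
  rw [mon, Finset.prod_eq_single j] <;> simp +contextual

lemma coeff_F_mon_mul (c v : Fin n → ℕ) (p : MvPolynomial (Fin n) K) :
    coeff (F c) (mon v * p) = if ∀ j, v j ≤ c j then coeff (F (c - v)) p else 0 := by
  rw [mon_eq_monomial, coeff_monomial_mul']
  have hle : F v ≤ F c ↔ ∀ j, v j ≤ c j := by
    constructor
    · intro h j; exact h j
    · intro h j; exact h j
  by_cases h : ∀ j, v j ≤ c j
  · rw [if_pos (hle.2 h), if_pos h, one_mul]
    congr 1
    ext j
    simp [F, Pi.sub_apply]
  · rw [if_neg (fun hc => h (hle.1 hc)), if_neg h]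

lemma coeff_F_mon (c v : Fin n → ℕ) :
    coeff (F c) (mon v : MvPolynomial (Fin n) K) = if v = c then 1 else 0 := by
  rw [mon_eq_monomial, coeff_monomial]
  by_cases h : v = c
  · subst h; simp
  · rw [if_neg (fun hc => h (F_inj hc)), if_neg h]

variable (a b : Fin n → ℕ)

lemma mon_b_mem : (mon b : MvPolynomial (Fin n) K) ∈ aciIdeal K n a b :=
  Ideal.subset_span (Or.inr rfl)

lemma X_pow_a_mem (j : Fin n) : (X j ^ a j : MvPolynomial (Fin n) K) ∈ aciIdeal K n a b :=
  Ideal.subset_span (Or.inl ⟨j, rfl⟩)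

lemma mem_of_le_a {v : Fin n → ℕ} (j : Fin n) (h : a j ≤ v j) :
    (mon v : MvPolynomial (Fin n) K) ∈ aciIdeal K n a b := by
  have hv : v = (fun i => if i = j then a j else 0) + (v - fun i => if i = j then a j else 0) := by
    funext i
    by_cases hi : i = j <;> simp [hi] <;> omega
  rw [hv, mon_add, mon_single]
  exact Ideal.mul_mem_right _ _ (X_pow_a_mem a b j)

lemma mem_of_le_b {v : Fin n → ℕ} (h : ∀ j, b j ≤ v j) :
    (mon v : MvPolynomial (Fin n) K) ∈ aciIdeal K n a b := by
  have hv : v = b + (v - b) := by funext i; have := h i; simp; omega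
  rw [hv, mon_add]
  exact Ideal.mul_mem_right _ _ (mon_b_mem a b)

lemma aci_eq_span_range :
    aciIdeal K n a b = Ideal.span (Set.range fun o : Option (Fin n) =>
      o.elim (mon b : MvPolynomial (Fin n) K) (fun i => X i ^ a i)) := by
  unfold aciIdeal
  congr 1
  ext q
  constructor
  · rintro (⟨i, rfl⟩ | rfl)
    · exact ⟨some i, rfl⟩
    · exact ⟨none, rfl⟩
  · rintro ⟨(_ | i), rfl⟩
    · exact Or.inr rfl
    · exact Or.inl ⟨i, rfl⟩

lemma killsI {c : Fin n → ℕ} (hca : ∀ j, c j < a j) (hcb : ∃ j, c j < b j) :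
    ∀ q ∈ aciIdeal K n a b, coeff (F c) q = 0 := by
  intro q hq
  rw [aci_eq_span_range, Ideal.mem_span_range_iff_exists_fun] at hq
  obtain ⟨f, rfl⟩ := hq
  rw [coeff_sum]
  refine Finset.sum_eq_zero fun o _ => ?_
  match o with
  | none =>
      simp only [Option.elim, mul_comm]
      rw [coeff_F_mon_mul]
      rw [if_neg]
      push_neg
      exact hcb
  | some i =>
      simp only [Option.elim]
      rw [mul_comm, ← mon_single i (a i), coeff_F_mon_mul, if_neg]
      intro h
      have h2 := h i
      simp at h2
      have := hca i
      omega

section Quot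
variable (a b : Fin n → ℕ)

/-- The box of exponent vectors below `a`. -/
def box : Finset (Fin n → ℕ) := Fintype.piFinset fun j => Finset.range (a j)

lemma mem_box {v : Fin n → ℕ} : v ∈ box a ↔ ∀ j, v j < a j := by
  simp [box]

/-- The exponents of the monomial basis of `R`. -/
def boxB : Finset (Fin n → ℕ) := (box a).filter fun v => ∃ k, v k < b k

lemma mem_boxB {v : Fin n → ℕ} : v ∈ boxB a b ↔ (∀ j, v j < a j) ∧ ∃ k, v k < b k := by
  simp [boxB, mem_box]

lemma mk_mon_zero_of_le_a {v : Fin n → ℕ} (j : Fin n) (h : a j ≤ v j) :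
    Ideal.Quotient.mk (aciIdeal K n a b) (mon v) = 0 :=
  Ideal.Quotient.eq_zero_iff_mem.2 (mem_of_le_a a b j h)

lemma mk_mon_zero_of_le_b {v : Fin n → ℕ} (h : ∀ j, b j ≤ v j) :
    Ideal.Quotient.mk (aciIdeal K n a b) (mon v) = 0 :=
  Ideal.Quotient.eq_zero_iff_mem.2 (mem_of_le_b a b h)

lemma mk_smul (r : K) (x : MvPolynomial (Fin n) K) :
    Ideal.Quotient.mk (aciIdeal K n a b) (r • x)
      = r • Ideal.Quotient.mk (aciIdeal K n a b) x := by
  have h := map_smul (Ideal.Quotient.mkₐ K (aciIdeal K n a b)) r x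
  rwa [Ideal.Quotient.mkₐ_eq_mk] at h

lemma monomial_eq_smul_mon (u : Fin n →₀ ℕ) (r : K) :
    monomial u r = r • (mon ⇑u : MvPolynomial (Fin n) K) := by
  rw [mon_coe, smul_monomial, smul_eq_mul, mul_one]

lemma mk_eq_sum (p : MvPolynomial (Fin n) K) :
    Ideal.Quotient.mk (aciIdeal K n a b) p
      = ∑ v ∈ boxB a b, coeff (F v) p • Ideal.Quotient.mk (aciIdeal K n a b) (mon v) := by
  induction p using MvPolynomial.induction_on' with
  | monomial u r =>
    have hcoeff : ∀ v : Fin n → ℕ, coeff (F v) (monomial u r) = if v = ⇑u then r else 0 := by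
      intro v
      rw [coeff_monomial]
      by_cases h : v = ⇑u
      · subst h; rw [if_pos (F_coe u).symm, if_pos rfl]
      · rw [if_neg, if_neg h]
        intro hc
        apply h
        apply F_inj
        rw [F_coe]
        exact hc.symm
    by_cases hu : (⇑u : Fin n → ℕ) ∈ boxB a b
    · rw [Finset.sum_eq_single_of_mem _ hu]
      · rw [hcoeff, if_pos rfl, monomial_eq_smul_mon, mk_smul]
      · intro v _ hv
        rw [hcoeff, if_neg hv, zero_smul]
    · have h0 : Ideal.Quotient.mk (aciIdeal K n a b) (monomial u r) = 0 := by
        rw [monomial_eq_smul_mon, mk_smul]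
        rw [mem_boxB] at hu
        push_neg at hu
        by_cases hbox : ∀ j, (u : Fin n → ℕ) j < a j
        · rw [mk_mon_zero_of_le_b a b (hu hbox), smul_zero]
        · push_neg at hbox
          obtain ⟨j, hj⟩ := hbox
          rw [mk_mon_zero_of_le_a a b j hj, smul_zero]
      rw [h0]
      refine (Finset.sum_eq_zero fun v hv => ?_).symm
      rw [hcoeff, if_neg, zero_smul]
      rintro rfl
      exact hu hv
  | add p q hp hq =>
    rw [map_add]
    simp only [coeff_add, add_smul, Finset.sum_add_distrib, hp, hq]

/-- The dual basis functional associated to a monomial, as a linear functional on `R`. -/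
noncomputable def dualMon (c : Fin n → ℕ) :
    (MvPolynomial (Fin n) K ⧸ aciIdeal K n a b) →ₗ[K] K :=
  if h : (∀ j, c j < a j) ∧ (∃ j, c j < b j) then
    (Submodule.liftQ ((aciIdeal K n a b).restrictScalars K) (lcoeff K (F c))
      (fun q hq => LinearMap.mem_ker.2 (killsI a b h.1 h.2 q hq))).comp
      (Submodule.Quotient.restrictScalarsEquiv K (aciIdeal K n a b)).symm.toLinearMap
  else 0

lemma dualMon_mk {c : Fin n → ℕ} (h1 : ∀ j, c j < a j) (h2 : ∃ j, c j < b j)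
    (p : MvPolynomial (Fin n) K) :
    dualMon a b c (Ideal.Quotient.mk (aciIdeal K n a b) p) = coeff (F c) p := by
  rw [dualMon, dif_pos ⟨h1, h2⟩]
  rfl

/-- The linear map `ω → R` determined by a "shift function" `G` on exponent vectors. -/
noncomputable def Fhom (G : (Fin n → ℕ) → (Fin n → ℕ)) :
    ((MvPolynomial (Fin n) K ⧸ aciIdeal K n a b) →ₗ[K] K)
      →ₗ[K] (MvPolynomial (Fin n) K ⧸ aciIdeal K n a b) where
  toFun ψ := ∑ v ∈ box a, ψ (Ideal.Quotient.mk _ (mon v)) •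
      Ideal.Quotient.mk (aciIdeal K n a b) (mon (G v))
  map_add' ψ φ := by simp [add_smul, Finset.sum_add_distrib]
  map_smul' r ψ := by simp [smul_smul, Finset.smul_sum]

lemma Fhom_apply (G : (Fin n → ℕ) → (Fin n → ℕ))
    (ψ : (MvPolynomial (Fin n) K ⧸ aciIdeal K n a b) →ₗ[K] K) :
    Fhom a b G ψ = ∑ v ∈ box a, ψ (Ideal.Quotient.mk _ (mon v)) •
      Ideal.Quotient.mk (aciIdeal K n a b) (mon (G v)) := rfl

lemma Fhom_dualMon (G : (Fin n → ℕ) → (Fin n → ℕ)) {c : Fin n → ℕ}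
    (h1 : ∀ j, c j < a j) (h2 : ∃ j, c j < b j) :
    Fhom a b G (dualMon a b c) = Ideal.Quotient.mk (aciIdeal K n a b) (mon (G c)) := by
  rw [Fhom_apply]
  rw [Finset.sum_eq_single_of_mem c ((mem_box a).2 h1)]
  · rw [dualMon_mk a b h1 h2, coeff_F_mon, if_pos rfl, one_smul]
  · intro v _ hv
    rw [dualMon_mk a b h1 h2, coeff_F_mon, if_neg hv, zero_smul]

end Quot
section Constr
variable (a b : Fin n → ℕ)

/-- unit exponent vector -/
def uv (j : Fin n) : Fin n → ℕ := fun i => if i = j then 1 else 0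

lemma mon_add_uv (v : Fin n → ℕ) (j : Fin n) :
    (mon (v + uv j) : MvPolynomial (Fin n) K) = mon v * X j := by
  rw [mon_add]
  show mon v * mon (fun i => if i = j then 1 else 0) = _
  rw [mon_single, pow_one]

lemma rlinear_of_X (f : ((MvPolynomial (Fin n) K ⧸ aciIdeal K n a b) →ₗ[K] K)
      →ₗ[K] (MvPolynomial (Fin n) K ⧸ aciIdeal K n a b))
    (hX : ∀ (j : Fin n) (ψ : (MvPolynomial (Fin n) K ⧸ aciIdeal K n a b) →ₗ[K] K),
      f (ψ.comp (LinearMap.mulLeft K (Ideal.Quotient.mk (aciIdeal K n a b) (X j))))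
        = Ideal.Quotient.mk (aciIdeal K n a b) (X j) * f ψ) :
    RLinearDualMap K (MvPolynomial (Fin n) K ⧸ aciIdeal K n a b) f := by
  intro r ψ
  obtain ⟨p, rfl⟩ := Ideal.Quotient.mk_surjective r
  induction p using MvPolynomial.induction_on generalizing ψ with
  | C k =>
    have hmk : Ideal.Quotient.mk (aciIdeal K n a b) (C k)
        = algebraMap K (MvPolynomial (Fin n) K ⧸ aciIdeal K n a b) k := by
      rw [← MvPolynomial.algebraMap_eq, Ideal.Quotient.mk_algebraMap]
    have hcomp : ψ.comp (LinearMap.mulLeft K (Ideal.Quotient.mk (aciIdeal K n a b) (C k)))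
        = k • ψ := by
      refine LinearMap.ext fun x => ?_
      obtain ⟨p, rfl⟩ := Ideal.Quotient.mk_surjective x
      simp only [LinearMap.comp_apply, LinearMap.mulLeft_apply, LinearMap.smul_apply]
      rw [← map_mul, ← MvPolynomial.smul_eq_C_mul, mk_smul a b, map_smul]
    rw [hcomp, map_smul, hmk, ← Algebra.smul_def]
  | add p q hp hq =>
    have hml : LinearMap.mulLeft K (Ideal.Quotient.mk (aciIdeal K n a b) p
          + Ideal.Quotient.mk (aciIdeal K n a b) q)
        = LinearMap.mulLeft K (Ideal.Quotient.mk (aciIdeal K n a b) p)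
          + LinearMap.mulLeft K (Ideal.Quotient.mk (aciIdeal K n a b) q) := by
      refine LinearMap.ext fun x => ?_
      simp only [LinearMap.mulLeft_apply, LinearMap.add_apply]
      ring
    have hcomp : ψ.comp (LinearMap.mulLeft K (Ideal.Quotient.mk (aciIdeal K n a b) p)
          + LinearMap.mulLeft K (Ideal.Quotient.mk (aciIdeal K n a b) q))
        = ψ.comp (LinearMap.mulLeft K (Ideal.Quotient.mk (aciIdeal K n a b) p))
          + ψ.comp (LinearMap.mulLeft K (Ideal.Quotient.mk (aciIdeal K n a b) q)) := by
      refine LinearMap.ext fun x => ?_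
      simp only [LinearMap.comp_apply, LinearMap.add_apply, map_add]
    simp only [map_add, hml, hcomp, hp, hq]
    ring
  | mul_X p j hp =>
    have hml : LinearMap.mulLeft K (Ideal.Quotient.mk (aciIdeal K n a b) (p * X j))
        = (LinearMap.mulLeft K (Ideal.Quotient.mk (aciIdeal K n a b) p)).comp
            (LinearMap.mulLeft K (Ideal.Quotient.mk (aciIdeal K n a b) (X j))) := by
      refine LinearMap.ext fun x => ?_
      simp only [LinearMap.comp_apply, LinearMap.mulLeft_apply]
      rw [map_mul, mul_assoc]
    rw [hml, ← LinearMap.comp_assoc, hX j, hp, map_mul]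
    ring

lemma rlinear_Fhom (G : (Fin n → ℕ) → (Fin n → ℕ))
    (HG0 : ∀ v : Fin n → ℕ, (∀ i, v i < a i) → ∀ j, v j = 0 →
      Ideal.Quotient.mk (aciIdeal K n a b) (mon v) = 0 ∨
      Ideal.Quotient.mk (aciIdeal K n a b) (mon (G v + uv j)) = 0)
    (HG1 : ∀ v : Fin n → ℕ, (∀ i, v i < a i) → ∀ j, v j + 1 < a j →
      Ideal.Quotient.mk (aciIdeal K n a b) (mon (v + uv j)) = 0 ∨
      Ideal.Quotient.mk (aciIdeal K n a b) (mon (G v)) =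
        Ideal.Quotient.mk (aciIdeal K n a b) (mon (G (v + uv j) + uv j))) :
    RLinearDualMap K (MvPolynomial (Fin n) K ⧸ aciIdeal K n a b) (Fhom a b G) := by
  apply rlinear_of_X
  intro j ψ
  rw [Fhom_apply, Fhom_apply, Finset.mul_sum]
  have hL : ∀ v : Fin n → ℕ,
      (ψ.comp (LinearMap.mulLeft K (Ideal.Quotient.mk (aciIdeal K n a b) (X j))))
        (Ideal.Quotient.mk (aciIdeal K n a b) (mon v))
      = ψ (Ideal.Quotient.mk (aciIdeal K n a b) (mon (v + uv j))) := by
    intro v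
    simp only [LinearMap.comp_apply, LinearMap.mulLeft_apply]
    rw [← map_mul, mul_comm (X j) (mon v), ← mon_add_uv]
  have hR : ∀ v : Fin n → ℕ,
      Ideal.Quotient.mk (aciIdeal K n a b) (X j) *
        (ψ (Ideal.Quotient.mk (aciIdeal K n a b) (mon v)) •
          Ideal.Quotient.mk (aciIdeal K n a b) (mon (G v)))
      = ψ (Ideal.Quotient.mk (aciIdeal K n a b) (mon v)) •
          Ideal.Quotient.mk (aciIdeal K n a b) (mon (G v + uv j)) := by
    intro v
    rw [mul_smul_comm, ← map_mul, mul_comm (X j) (mon (G v)), ← mon_add_uv]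
  simp only [hL, hR]
  rw [show (∑ v ∈ box a, ψ (Ideal.Quotient.mk (aciIdeal K n a b) (mon (v + uv j))) •
        Ideal.Quotient.mk (aciIdeal K n a b) (mon (G v)))
      = ∑ v ∈ (box a).filter (fun v => v j + 1 < a j),
        ψ (Ideal.Quotient.mk (aciIdeal K n a b) (mon (v + uv j))) •
        Ideal.Quotient.mk (aciIdeal K n a b) (mon (G v)) from
    (Finset.sum_subset (Finset.filter_subset _ _) ?_).symm]
  · rw [show (∑ v ∈ box a, ψ (Ideal.Quotient.mk (aciIdeal K n a b) (mon v)) •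
          Ideal.Quotient.mk (aciIdeal K n a b) (mon (G v + uv j)))
        = ∑ v ∈ (box a).filter (fun v => 0 < v j),
          ψ (Ideal.Quotient.mk (aciIdeal K n a b) (mon v)) •
          Ideal.Quotient.mk (aciIdeal K n a b) (mon (G v + uv j)) from
      (Finset.sum_subset (Finset.filter_subset _ _) ?_).symm]
    · refine Finset.sum_nbij' (fun v => v + uv j) (fun v => v - uv j) ?_ ?_ ?_ ?_ ?_
      · intro v hv
        rw [Finset.mem_filter, mem_box] at hv ⊢
        refine ⟨fun i => ?_, ?_⟩
        · have h1 := hv.1 i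
          have h2 := hv.2
          by_cases hij : i = j
          · subst hij; simp [uv]; omega
          · simp only [Pi.add_apply, uv, if_neg hij]; omega
        · simp [uv]
      · intro v hv
        rw [Finset.mem_filter, mem_box] at hv ⊢
        refine ⟨fun i => ?_, ?_⟩
        · have h1 := hv.1 i
          by_cases hij : i = j
          · subst hij
            have h2 := hv.2
            simp [uv]; omega
          · simp only [Pi.sub_apply, uv, if_neg hij]; omega
        · have h1 := hv.1 j
          have h2 := hv.2
          simp [uv]; omega
      · intro v _
        funext i
        by_cases hij : i = j
        · subst hij; simp [uv]
        · simp [uv, hij]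
      · intro v hv
        rw [Finset.mem_filter] at hv
        have h2 := hv.2
        funext i
        by_cases hij : i = j
        · subst hij; simp [uv]; omega
        · simp [uv, hij]
      · intro v hv
        rw [Finset.mem_filter, mem_box] at hv
        rcases HG1 v hv.1 j hv.2 with h | h
        · rw [h, map_zero, zero_smul, zero_smul]
        · rw [h]
    · intro v hv hnv
      rw [Finset.mem_filter] at hnv
      rw [mem_box] at hv
      have hvj : v j = 0 := by
        by_contra h
        exact hnv ⟨(mem_box a).2 hv, Nat.pos_of_ne_zero h⟩
      rcases HG0 v hv j hvj with h | h
      · rw [h, map_zero, zero_smul]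
      · rw [h, smul_zero]
  · intro v hv hnv
    rw [Finset.mem_filter] at hnv
    rw [mem_box] at hv
    have hle : a j ≤ v j + 1 := by
      by_contra h
      exact hnv ⟨(mem_box a).2 hv, by omega⟩
    have hz : a j ≤ (v + uv j) j := by
      simp [uv]; omega
    rw [mk_mon_zero_of_le_a a b j hz, map_zero, zero_smul]

end Constr
section Gens
variable (a b : Fin n → ℕ)

lemma uv_same (j : Fin n) : uv j j = 1 := by simp [uv]
lemma uv_other {i j : Fin n} (h : i ≠ j) : uv j i = 0 := by simp [uv, h]

def cvec (k : Fin n) : Fin n → ℕ := fun l => if l = k then b k - 1 else a l - 1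

lemma cvec_same (k : Fin n) : cvec a b k k = b k - 1 := by simp [cvec]
lemma cvec_other {l k : Fin n} (h : l ≠ k) : cvec a b k l = a l - 1 := by simp [cvec, h]

lemma cvec_lt_a (hb : ∀ i, b i < a i) (k : Fin n) : ∀ l, cvec a b k l < a l := by
  intro l
  by_cases h : l = k
  · subst h; rw [cvec_same]; have := hb l; omega
  · rw [cvec_other a b h]; have := hb l; omega

lemma cvec_lt_b {k : Fin n} (hk : 0 < b k) : ∃ l, cvec a b k l < b l :=
  ⟨k, by rw [cvec_same]; omega⟩

/-- first shift function: `v ↦ a - 1 - v` -/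
def G1 : (Fin n → ℕ) → (Fin n → ℕ) := fun v l => a l - 1 - v l

lemma HG0_G1 (hb : ∀ i, b i < a i) : ∀ v : Fin n → ℕ, (∀ i, v i < a i) → ∀ j, v j = 0 →
    Ideal.Quotient.mk (aciIdeal K n a b) (mon v) = 0 ∨
    Ideal.Quotient.mk (aciIdeal K n a b) (mon (G1 a v + uv j)) = 0 := by
  intro v _ j hj
  right
  apply mk_mon_zero_of_le_a a b j
  rw [Pi.add_apply, uv_same]
  show a j ≤ a j - 1 - v j + 1
  have := hb j
  omega

lemma HG1_G1 : ∀ v : Fin n → ℕ, (∀ i, v i < a i) → ∀ j, v j + 1 < a j →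
    Ideal.Quotient.mk (aciIdeal K n a b) (mon (v + uv j)) = 0 ∨
    Ideal.Quotient.mk (aciIdeal K n a b) (mon (G1 a v)) =
      Ideal.Quotient.mk (aciIdeal K n a b) (mon (G1 a (v + uv j) + uv j)) := by
  intro v _ j hj
  right
  have he : G1 a v = G1 a (v + uv j) + uv j := by
    funext l
    simp only [G1, Pi.add_apply]
    by_cases h : l = j
    · subst h
      rw [uv_same]
      omega
    · rw [uv_other h]
      omega
  rw [he]

lemma f1_val (hb : ∀ i, b i < a i) {k : Fin n} (hk : 0 < b k) :
    Fhom a b (G1 a) (dualMon a b (cvec a b k))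
      = Ideal.Quotient.mk (aciIdeal K n a b) (X k ^ (a k - b k)) := by
  rw [Fhom_dualMon a b _ (cvec_lt_a a b hb k) (cvec_lt_b a b hk)]
  have he : G1 a (cvec a b k) = fun l => if l = k then a k - b k else 0 := by
    funext l
    by_cases h : l = k
    · subst h
      show a l - 1 - cvec a b l l = _
      rw [cvec_same, if_pos rfl]
      have := hb l; omega
    · show a l - 1 - cvec a b k l = _
      rw [cvec_other a b h, if_neg h]
      omega
  rw [he, mon_single]

/-- the least index `k` with `v k < b k` (or junk) -/
noncomputable def kv (hn : 0 < n) (v : Fin n → ℕ) : Fin n :=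
  if h : (Finset.univ.filter fun k => v k < b k).Nonempty then Finset.min' _ h else ⟨0, hn⟩

def G2core (k : Fin n) (v : Fin n → ℕ) : Fin n → ℕ :=
  fun l => if l = k then b k - 1 - v k else a l - 1 + b l - v l

lemma G2core_same (k : Fin n) (v : Fin n → ℕ) : G2core a b k v k = b k - 1 - v k := by
  simp [G2core]

lemma G2core_other {l k : Fin n} (v : Fin n → ℕ) (h : l ≠ k) :
    G2core a b k v l = a l - 1 + b l - v l := by simp [G2core, h]

/-- second shift function -/
noncomputable def G2 (hn : 0 < n) (v : Fin n → ℕ) : Fin n → ℕ :=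
  if (Finset.univ.filter fun k => v k < b k).Nonempty then G2core a b (kv b hn v) v else 0

lemma kv_spec (hn : 0 < n) {v : Fin n → ℕ}
    (h : (Finset.univ.filter fun k => v k < b k).Nonempty) :
    v (kv b hn v) < b (kv b hn v) ∧ ∀ k, v k < b k → kv b hn v ≤ k := by
  rw [kv, dif_pos h]
  constructor
  · have := Finset.min'_mem _ h
    simpa using this
  · intro k hk
    exact Finset.min'_le _ _ (by simpa using hk)

lemma G2_of_nonempty (hn : 0 < n) {v : Fin n → ℕ}
    (h : (Finset.univ.filter fun k => v k < b k).Nonempty) :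
    G2 a b hn v = G2core a b (kv b hn v) v := by
  rw [G2, if_pos h]

lemma nonempty_filter_of {v : Fin n → ℕ} {k : Fin n} (hk : v k < b k) :
    (Finset.univ.filter fun k => v k < b k).Nonempty :=
  ⟨k, by simpa using hk⟩

lemma all_b_le_of_empty {v : Fin n → ℕ}
    (h : ¬ (Finset.univ.filter fun k => v k < b k).Nonempty) : ∀ k, b k ≤ v k := by
  intro k
  by_contra hc
  exact h (nonempty_filter_of b (show v k < b k by omega))

lemma HG0_G2 (hb : ∀ i, b i < a i) (hn : 0 < n) :
    ∀ v : Fin n → ℕ, (∀ i, v i < a i) → ∀ j, v j = 0 →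
    Ideal.Quotient.mk (aciIdeal K n a b) (mon v) = 0 ∨
    Ideal.Quotient.mk (aciIdeal K n a b) (mon (G2 a b hn v + uv j)) = 0 := by
  intro v hv j hj
  by_cases hS : (Finset.univ.filter fun k => v k < b k).Nonempty
  · right
    rw [G2_of_nonempty a b hn hS]
    obtain ⟨hk1, _⟩ := kv_spec b hn hS
    by_cases hjk : j = kv b hn v
    · rw [← hjk] at hk1 ⊢
      apply mk_mon_zero_of_le_b a b
      intro l
      rw [Pi.add_apply]
      by_cases hl : l = j
      · subst hl
        rw [G2core_same, uv_same, hj]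
        rw [hj] at hk1
        omega
      · have hla := hv l
        rw [G2core_other a b _ hl, uv_other hl]
        omega
    · apply mk_mon_zero_of_le_a a b j
      rw [Pi.add_apply, G2core_other a b _ hjk, uv_same, hj]
      have := hb j
      omega
  · left
    exact mk_mon_zero_of_le_b a b (all_b_le_of_empty b hS)

lemma HG1_G2 (hb : ∀ i, b i < a i) (hn : 0 < n) :
    ∀ v : Fin n → ℕ, (∀ i, v i < a i) → ∀ j, v j + 1 < a j →
    Ideal.Quotient.mk (aciIdeal K n a b) (mon (v + uv j)) = 0 ∨
    Ideal.Quotient.mk (aciIdeal K n a b) (mon (G2 a b hn v)) =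
      Ideal.Quotient.mk (aciIdeal K n a b) (mon (G2 a b hn (v + uv j) + uv j)) := by
  intro v hv j hj
  by_cases hS : (Finset.univ.filter fun k => v k < b k).Nonempty
  · by_cases hS' : (Finset.univ.filter fun k => (v + uv j) k < b k).Nonempty
    · right
      obtain ⟨hk1, hk2⟩ := kv_spec b hn hS
      obtain ⟨hk1', hk2'⟩ := kv_spec b hn hS'
      rw [G2_of_nonempty a b hn hS, G2_of_nonempty a b hn hS']
      generalize hkg : kv b hn v = k at hk1 hk2 ⊢
      generalize hkg' : kv b hn (v + uv j) = k' at hk1' hk2' ⊢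
      have hvle : ∀ l, v l ≤ (v + uv j) l := by
        intro l
        rw [Pi.add_apply]
        omega
      have hkk' : k ≤ k' := hk2 k' (lt_of_le_of_lt (hvle k') hk1')
      by_cases hkeq : k = k'
      · subst hkeq
        have he : G2core a b k v = G2core a b k (v + uv j) + uv j := by
          funext l
          have h1 := hv l
          rw [Pi.add_apply]
          by_cases hlk : l = k
          · subst hlk
            rw [G2core_same, G2core_same, Pi.add_apply] at *
            by_cases hlj : l = j
            · subst hlj
              rw [uv_same] at hk1' ⊢
              omega
            · rw [uv_other hlj] at hk1' ⊢
              omega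
          · rw [G2core_other a b _ hlk, G2core_other a b _ hlk, Pi.add_apply]
            by_cases hlj : l = j
            · subst hlj
              rw [uv_same]
              omega
            · rw [uv_other hlj]
              omega
        rw [he]
      · have hklt : k < k' := lt_of_le_of_ne hkk' hkeq
        have hknot : ¬ ((v + uv j) k < b k) := fun hc =>
          absurd (hk2' k hc) (not_le.mpr hklt)
        have hkj : k = j := by
          by_contra hc
          apply hknot
          rw [Pi.add_apply, uv_other (fun h => hc h)]
          omega
        subst hkj
        -- now j is renamed to k
        have hk'k : k' ≠ k := (Fin.ne_of_lt hklt).symm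
        have hbk : b k ≤ (v + uv k) k := not_lt.mp hknot
        rw [Pi.add_apply, uv_same] at hbk
        have hvk' : v k' < b k' := by
          have h := hk1'
          rw [Pi.add_apply, uv_other hk'k] at h
          omega
        have hL0 : Ideal.Quotient.mk (aciIdeal K n a b) (mon (G2core a b k v)) = 0 := by
          apply mk_mon_zero_of_le_a a b k'
          rw [G2core_other a b _ hk'k]
          have := hv k'
          omega
        have hR0 : Ideal.Quotient.mk (aciIdeal K n a b)
            (mon (G2core a b k' (v + uv k) + uv k)) = 0 := by
          apply mk_mon_zero_of_le_a a b k
          rw [Pi.add_apply, G2core_other a b _ (fun h => hk'k h.symm), uv_same, Pi.add_apply,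
            uv_same]
          have h1 := hv k
          have h2 := hb k
          omega
        rw [hL0, hR0]
    · left
      exact mk_mon_zero_of_le_b a b (all_b_le_of_empty b hS')
  · left
    apply mk_mon_zero_of_le_b a b
    intro l
    have h1 := all_b_le_of_empty b hS l
    have h2 : v l ≤ (v + uv j) l := by rw [Pi.add_apply]; omega
    omega

lemma mon_beta (k : Fin n) : (mon (fun l => if l = k then 0 else b l) : MvPolynomial (Fin n) K)
    = ∏ j, if j = k then 1 else X j ^ b j := by
  rw [mon]
  refine Finset.prod_congr rfl fun j _ => ?_
  by_cases h : j = k <;> simp [h]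

lemma f2_val (hb : ∀ i, b i < a i) (hn : 0 < n) {k : Fin n} (hk : 0 < b k) :
    Fhom a b (G2 a b hn) (dualMon a b (cvec a b k))
      = Ideal.Quotient.mk (aciIdeal K n a b) (∏ j, if j = k then 1 else X j ^ b j) := by
  rw [Fhom_dualMon a b _ (cvec_lt_a a b hb k) (cvec_lt_b a b hk)]
  have hck : cvec a b k k < b k := by rw [cvec_same]; omega
  have hS : (Finset.univ.filter fun l => cvec a b k l < b l).Nonempty :=
    nonempty_filter_of b hck
  have hkv : kv b hn (cvec a b k) = k := by
    obtain ⟨h1, h2⟩ := kv_spec b hn hS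
    have hle := h2 k hck
    by_contra hc
    rw [cvec_other a b hc] at h1
    have := hb (kv b hn (cvec a b k))
    omega
  rw [G2_of_nonempty a b hn hS, hkv, ← mon_beta]
  have he : G2core a b k (cvec a b k) = fun l => if l = k then 0 else b l := by
    funext l
    by_cases h : l = k
    · subst h
      rw [G2core_same, cvec_same, if_pos rfl]
      omega
    · rw [G2core_other a b _ h, cvec_other a b h, if_neg h]
      have := hb l
      omega
  rw [he]

end Gens
section Main
variable (a b : Fin n → ℕ)

/-- The target ideal. -/
noncomputable def Jideal : Ideal (MvPolynomial (Fin n) K ⧸ aciIdeal K n a b) :=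
  Ideal.span
    ((fun i => Ideal.Quotient.mk (aciIdeal K n a b)
        (MvPolynomial.X i ^ (a i - b i))) '' {i | 0 < b i} ∪
     (fun i => Ideal.Quotient.mk (aciIdeal K n a b)
        (∏ j, if j = i then 1 else MvPolynomial.X j ^ b j)) '' {i | 0 < b i})

lemma dualMon_comp_zero (hb : ∀ i, b i < a i) {k : Fin n} (hk : 0 < b k) :
    (dualMon a b (cvec a b k)).comp
      (LinearMap.mulLeft K (Ideal.Quotient.mk (aciIdeal K n a b) (X k ^ b k))) = 0 := by
  refine LinearMap.ext fun x => ?_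
  obtain ⟨p, rfl⟩ := Ideal.Quotient.mk_surjective x
  simp only [LinearMap.comp_apply, LinearMap.mulLeft_apply, LinearMap.zero_apply]
  rw [← map_mul, ← mon_single k (b k), dualMon_mk a b (cvec_lt_a a b hb k) (cvec_lt_b a b hk),
    coeff_F_mon_mul, if_neg]
  intro hc
  have := hc k
  rw [if_pos rfl, cvec_same] at this
  omega

lemma mem_J_of_ann (hb : ∀ i, b i < a i) {k : Fin n} (hk : 0 < b k)
    {r : MvPolynomial (Fin n) K ⧸ aciIdeal K n a b}
    (hr : Ideal.Quotient.mk (aciIdeal K n a b) (X k ^ b k) * r = 0) :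
    r ∈ Jideal a b := by
  obtain ⟨p, rfl⟩ := Ideal.Quotient.mk_surjective r
  have hmem : mon (fun i => if i = k then b k else 0) * p ∈ aciIdeal K n a b := by
    rw [← Ideal.Quotient.eq_zero_iff_mem, map_mul, mon_single]
    exact hr
  rw [mk_eq_sum a b p]
  apply Ideal.sum_mem
  intro v hv
  rw [mem_boxB] at hv
  by_cases h1 : a k - b k ≤ v k
  · apply Submodule.smul_of_tower_mem
    have hsplit : v = (fun i => if i = k then a k - b k else 0)
        + (v - fun i => if i = k then a k - b k else 0) := by
      funext i
      by_cases hik : i = k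
      · subst hik; simp; omega
      · simp [hik]
    rw [hsplit, mon_add, map_mul, mon_single]
    exact Ideal.mul_mem_right _ _ (Ideal.subset_span (Or.inl ⟨k, hk, rfl⟩))
  · by_cases h2 : ∀ l, l ≠ k → b l ≤ v l
    · apply Submodule.smul_of_tower_mem
      have hsplit : v = (fun l => if l = k then 0 else b l)
          + (v - fun l => if l = k then 0 else b l) := by
        funext i
        by_cases hik : i = k
        · subst hik; simp
        · have := h2 i hik; simp [hik]; omega
      rw [hsplit, mon_add, map_mul, mon_beta]
      exact Ideal.mul_mem_right _ _ (Ideal.subset_span (Or.inr ⟨k, hk, rfl⟩))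
    · push_neg at h1 h2
      obtain ⟨l, hlk, hl⟩ := h2
      have hc0 : coeff (F (v + fun i => if i = k then b k else 0))
          (mon (fun i => if i = k then b k else 0) * p) = 0 := by
        apply killsI a b ?_ ?_ _ hmem
        · intro j
          by_cases hjk : j = k
          · subst hjk; simp; have := hv.1 j; omega
          · simp [hjk]; exact hv.1 j
        · refine ⟨l, ?_⟩
          simp [hlk]
          omega
      rw [coeff_F_mon_mul] at hc0
      rw [if_pos (fun j => by by_cases hjk : j = k <;> simp [hjk])] at hc0
      have harith : ((v + fun i => if i = k then b k else 0)
          - fun i => if i = k then b k else 0) = v := by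
        funext i
        by_cases hik : i = k
        · subst hik; simp
        · simp [hik]
      rw [harith] at hc0
      rw [hc0, zero_smul]
      exact Submodule.zero_mem _

lemma fval_mem (hb : ∀ i, b i < a i) (hn : 0 < n)
    (f : ((MvPolynomial (Fin n) K ⧸ aciIdeal K n a b) →ₗ[K] K)
      →ₗ[K] (MvPolynomial (Fin n) K ⧸ aciIdeal K n a b))
    (hf : RLinearDualMap K (MvPolynomial (Fin n) K ⧸ aciIdeal K n a b) f)
    (ψ : (MvPolynomial (Fin n) K ⧸ aciIdeal K n a b) →ₗ[K] K) :
    f ψ ∈ Jideal a b := by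
  have hfd : ∀ k : Fin n, 0 < b k → f (dualMon a b (cvec a b k)) ∈ Jideal a b := by
    intro k hk
    apply mem_J_of_ann a b hb hk
    rw [← hf (Ideal.Quotient.mk (aciIdeal K n a b) (X k ^ b k)) (dualMon a b (cvec a b k)),
      dualMon_comp_zero a b hb hk, map_zero]
  have hdec : ψ = ∑ v ∈ boxB a b, ψ (Ideal.Quotient.mk (aciIdeal K n a b) (mon v)) •
      ((dualMon a b (cvec a b (kv b hn v))).comp
        (LinearMap.mulLeft K (Ideal.Quotient.mk (aciIdeal K n a b)
          (mon (cvec a b (kv b hn v) - v))))) := by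
    refine LinearMap.ext fun r => ?_
    obtain ⟨p, rfl⟩ := Ideal.Quotient.mk_surjective r
    rw [LinearMap.sum_apply]
    conv_lhs => rw [mk_eq_sum a b p, map_sum]
    refine Finset.sum_congr rfl fun v hv => ?_
    rw [mem_boxB] at hv
    obtain ⟨hva, l0, hl0⟩ := hv
    have hS : (Finset.univ.filter fun k => v k < b k).Nonempty := nonempty_filter_of b hl0
    obtain ⟨hkv1, _⟩ := kv_spec b hn hS
    have hvle : ∀ i, v i ≤ cvec a b (kv b hn v) i := by
      intro i
      by_cases hik : i = kv b hn v
      · subst hik; rw [cvec_same]; omega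
      · rw [cvec_other a b hik]; have := hva i; omega
    rw [map_smul, LinearMap.smul_apply, LinearMap.comp_apply, LinearMap.mulLeft_apply,
      ← map_mul, dualMon_mk a b (cvec_lt_a a b hb _) (cvec_lt_b a b (by omega)),
      coeff_F_mon_mul]
    have hcond : ∀ j, (cvec a b (kv b hn v) - v) j ≤ cvec a b (kv b hn v) j := by
      intro j
      rw [Pi.sub_apply]
      exact Nat.sub_le _ _
    rw [if_pos hcond]
    have harith : (cvec a b (kv b hn v) - (cvec a b (kv b hn v) - v)) = v := by
      funext i
      have := hvle i
      simp only [Pi.sub_apply]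
      omega
    rw [harith, smul_eq_mul, smul_eq_mul, mul_comm]
  rw [hdec, map_sum]
  apply Ideal.sum_mem
  intro v hv
  rw [mem_boxB] at hv
  obtain ⟨hva, l0, hl0⟩ := hv
  have hS : (Finset.univ.filter fun k => v k < b k).Nonempty := nonempty_filter_of b hl0
  obtain ⟨hkv1, _⟩ := kv_spec b hn hS
  rw [map_smul, hf]
  apply Submodule.smul_of_tower_mem
  exact Ideal.mul_mem_left _ _ (hfd _ (by omega))

lemma trace_le_J (hb : ∀ i, b i < a i) (hn : 0 < n) :
    traceIdeal K (MvPolynomial (Fin n) K ⧸ aciIdeal K n a b) ≤ Jideal a b := by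
  rw [traceIdeal]
  apply Ideal.span_le.2
  rintro x ⟨f, hf, ψ, rfl⟩
  exact fval_mem a b hb hn f hf ψ

lemma J_le_trace (hb : ∀ i, b i < a i) (hn : 0 < n) :
    Jideal a b ≤ traceIdeal K (MvPolynomial (Fin n) K ⧸ aciIdeal K n a b) := by
  rw [Jideal]
  apply Ideal.span_le.2
  rintro x (⟨i, hi, rfl⟩ | ⟨i, hi, rfl⟩)
  · apply Ideal.subset_span
    exact ⟨Fhom a b (G1 a),
      rlinear_Fhom a b (G1 a) (HG0_G1 a b hb) (HG1_G1 a b),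
      ⟨dualMon a b (cvec a b i), f1_val a b hb hi⟩⟩
  · apply Ideal.subset_span
    exact ⟨Fhom a b (G2 a b hn),
      rlinear_Fhom a b (G2 a b hn) (HG0_G2 a b hb hn) (HG1_G2 a b hb hn),
      ⟨dualMon a b (cvec a b i), f2_val a b hb hn hi⟩⟩

end Main
end ACIP

/-- For the almost complete intersection `R = S/(x_1^{a_1},…,x_n^{a_n}, w)` with
`w = x_1^{b_1}⋯x_n^{b_n}`, `b_i < a_i` for all `i` and `b_i > 0` for at least two indices,
the trace of `ω_R` is generated by the monomials `x_i^{a_i-b_i}` and `w/x_i^{b_i}`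
for those `i` with `b_i > 0`. -/
theorem stmt10 (K : Type*) [Field K] (n : ℕ) (a b : Fin n → ℕ)
    (hb : ∀ i, b i < a i) (h2 : ∃ i j, i ≠ j ∧ 0 < b i ∧ 0 < b j) :
    traceIdeal K (MvPolynomial (Fin n) K ⧸ aciIdeal K n a b) =
      Ideal.span
        ((fun i => Ideal.Quotient.mk (aciIdeal K n a b)
            (MvPolynomial.X i ^ (a i - b i))) '' {i | 0 < b i} ∪
         (fun i => Ideal.Quotient.mk (aciIdeal K n a b)
            (∏ j, if j = i then 1 else MvPolynomial.X j ^ b j)) '' {i | 0 < b i}) := by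
  obtain ⟨i, _, _, _, _⟩ := h2
  have hn : 0 < n := i.pos
  exact le_antisymm (ACIP.trace_le_J a b hb hn) (ACIP.J_le_trace a b hb hn)
end

section
/- Let R = S/(x_1^{a_1},...,x_n^{a_n}, x_1^{b_1}···x_n^{b_n}) with 0 ≤ b_i < a_i for all i and b_i > 0 for at least two i. Then R is of Teter type (in the multigraded sense) if and only if there exist indices j ≠ j' with 2b_j ≥ a_j and 2b_{j'} ≥ a_{j'}. -/
/-- The divisor poset of `R = S/(x_1^{a_1},…,x_n^{a_n}, x^b)`: exponent vectors of the
monomials surviving in `R`. -/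
def aciPoset (n : ℕ) (a b : Fin n → ℕ) : Set (Fin n → ℕ) :=
  {c | (∀ i, c i < a i) ∧ ¬ b ≤ c}

/-- The trace poset ideal of the almost complete intersection: the poset ideal of the
divisor poset generated by the monomials `x_i^{a_i-b_i}` and `w/x_i^{b_i}` for `b_i > 0`. -/
def aciTraceSet (n : ℕ) (a b : Fin n → ℕ) : Set (Fin n → ℕ) :=
  {c ∈ aciPoset n a b | ∃ i, 0 < b i ∧
    ((fun j => if j = i then a i - b i else 0) ≤ c ∨
     (fun j => if j = i then 0 else b j) ≤ c)}

/-- The almost complete intersection `R = S/(x_1^{a_1},…,x_n^{a_n}, x_1^{b_1}⋯x_n^{b_n})`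
(with `b_i < a_i` for all `i` and `b_i > 0` at least twice) is of Teter type in the
multigraded sense — i.e. its trace poset ideal is symmetric — iff there exist `j ≠ j'`
with `2b_j ≥ a_j` and `2b_{j'} ≥ a_{j'}`. -/
theorem stmt11 (n : ℕ) (a b : Fin n → ℕ)
    (hb : ∀ i, b i < a i) (h2 : ∃ i j, i ≠ j ∧ 0 < b i ∧ 0 < b j) :
    IsSymmetricIdeal (aciTraceSet n a b) ↔
      ∃ j j', j ≠ j' ∧ a j ≤ 2 * b j ∧ a j' ≤ 2 * b j' := by
  obtain ⟨i0, j0, hij0, hbi0, hbj0⟩ := h2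
  have ha : ∀ k, 1 ≤ a k := fun k => lt_of_le_of_lt (Nat.zero_le _) (hb k)
  have hother : ∀ i : Fin n, ∃ j, j ≠ i ∧ 0 < b j := by
    intro i
    rcases eq_or_ne i i0 with h | h
    · exact ⟨j0, by rw [h]; exact fun hc => hij0 hc.symm, hbj0⟩
    · exact ⟨i0, fun hc => h hc.symm, hbi0⟩
  -- membership lemmas
  have hgmem : ∀ i, 0 < b i →
      (fun j => if j = i then a i - b i else 0) ∈ aciTraceSet n a b := by
    intro i hi
    obtain ⟨j, hji, hbj⟩ := hother i
    refine ⟨⟨?_, ?_⟩, i, hi, Or.inl (le_refl _)⟩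
    · intro k
      rcases eq_or_ne k i with hk | hk
      · subst hk; simp only [if_pos rfl, if_true]; have := hb k; omega
      · simp only [if_neg hk]; exact ha k
    · rw [Pi.le_def]; push_neg
      exact ⟨j, by simp only [if_neg hji]; exact hbj⟩
  have hhmem : ∀ i, 0 < b i →
      (fun j => if j = i then 0 else b j) ∈ aciTraceSet n a b := by
    intro i hi
    refine ⟨⟨?_, ?_⟩, i, hi, Or.inr (le_refl _)⟩
    · intro k
      rcases eq_or_ne k i with hk | hk
      · subst hk; simp only [if_pos rfl, if_true]; exact ha k
      · simp only [if_neg hk]; exact hb k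
    · rw [Pi.le_def]; push_neg
      exact ⟨i, by simp only [if_pos rfl, if_true]; exact hi⟩
  have hsmem : ∀ i, 0 < b i →
      (fun k => if k = i then b i - 1 else a k - 1) ∈ aciTraceSet n a b := by
    intro i hi
    refine ⟨⟨?_, ?_⟩, i, hi, Or.inr ?_⟩
    · intro k
      rcases eq_or_ne k i with hk | hk
      · subst hk; simp only [if_pos rfl, if_true]; have := hb k; omega
      · simp only [if_neg hk]; have := ha k; omega
    · rw [Pi.le_def]; push_neg
      exact ⟨i, by simp only [if_pos rfl, if_true]; omega⟩
    · rw [Pi.le_def]; intro k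
      rcases eq_or_ne k i with hk | hk
      · subst hk; simp only [if_pos rfl, if_true]; omega
      · simp only [if_neg hk]; have := hb k; omega
  constructor
  · rintro ⟨m, f, hbij, hf⟩
    have key : ∀ v ∈ aciTraceSet n a b,
        (∀ k, v k ≤ m k) ∧ (fun k => m k - v k) ∈ aciTraceSet n a b := by
      intro v hv
      have h1 := hbij.mapsTo hv
      have h2 := hf v hv
      have hle : ∀ k, v k ≤ m k := by
        intro k
        have := congrFun h2 k
        simp only [Pi.add_apply] at this
        omega
      refine ⟨hle, ?_⟩
      have heq : (fun k => m k - v k) = f v := by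
        funext k
        have := congrFun h2 k
        simp only [Pi.add_apply] at this
        omega
      rw [heq]; exact h1
    have hm : ∀ k, m k = a k - 1 := by
      intro k
      have lower : ∀ i, 0 < b i → k ≠ i → a k - 1 ≤ m k := by
        intro i hi hki
        have l := (key _ (hsmem i hi)).1 k
        simp only [if_neg hki] at l
        exact l
      have upper : ∀ i, 0 < b i → k ≠ i → m k < a k := by
        intro i hi hki
        have u := ((key _ (hgmem i hi)).2).1.1 k
        simp only [if_neg hki] at u
        omega
      rcases eq_or_ne k i0 with hk | hk
      · have hk' : k ≠ j0 := by rw [hk]; exact hij0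
        have e1 := lower j0 hbj0 hk'
        have e2 := upper j0 hbj0 hk'
        omega
      · have e1 := lower i0 hbi0 hk
        have e2 := upper i0 hbi0 hk
        omega
    have hstep : ∀ i, 0 < b i → ∃ k, k ≠ i ∧ a k ≤ 2 * b k := by
      intro i hi
      have h3 := ((key _ (hhmem i hi)).2).1.2
      rw [Pi.le_def] at h3; push_neg at h3
      obtain ⟨k, hk⟩ := h3
      try simp only at hk
      rw [hm k] at hk
      rcases eq_or_ne k i with hk' | hk'
      · exfalso
        rw [if_pos hk'] at hk
        have := hb k; have := ha k
        omega
      · refine ⟨k, hk', ?_⟩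
        rw [if_neg hk'] at hk
        have := ha k
        omega
    obtain ⟨k, hki, hak⟩ := hstep i0 hbi0
    have hbk : 0 < b k := by have := ha k; omega
    obtain ⟨k', hk'k, hak'⟩ := hstep k hbk
    exact ⟨k', k, hk'k, hak', hak⟩
  · rintro ⟨j, j', hjj', hj, hj'⟩
    have hbj : 0 < b j := by have := ha j; omega
    have hbj' : 0 < b j' := by have := ha j'; omega
    have hmaps : ∀ v ∈ aciTraceSet n a b,
        (fun k => a k - 1 - v k) ∈ aciTraceSet n a b := by
      rintro v ⟨⟨hva, hvb⟩, i, hbi, hcase⟩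
      have hw : ∃ k0, a k0 - b k0 ≤ v k0 := by
        rcases hcase with hc | hc
        · rw [Pi.le_def] at hc
          have := hc i
          simp only [if_pos rfl, if_true] at this
          exact ⟨i, this⟩
        · rw [Pi.le_def] at hc
          rcases eq_or_ne i j with hij | hij
          · have hj'i : j' ≠ i := by rw [hij]; exact fun h => hjj' h.symm
            have := hc j'
            simp only [if_neg hj'i] at this
            exact ⟨j', by omega⟩
          · have := hc j
            simp only [if_neg (fun h => hij h.symm : j ≠ i)] at this
            exact ⟨j, by omega⟩
      obtain ⟨k0, hk0⟩ := hw
      rw [Pi.le_def] at hvb; push_neg at hvb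
      obtain ⟨k1, hk1⟩ := hvb
      refine ⟨⟨?_, ?_⟩, k1, by omega, Or.inl ?_⟩
      · intro k; simp only; have := ha k; omega
      · rw [Pi.le_def]; push_neg
        refine ⟨k0, ?_⟩
        have := hb k0; have := hva k0
        omega
      · rw [Pi.le_def]; intro k
        rcases eq_or_ne k k1 with hk | hk
        · subst hk
          simp only [if_pos rfl, if_true]
          have := hb k; have := hva k
          omega
        · simp only [if_neg hk]; exact Nat.zero_le _
    refine ⟨fun k => a k - 1, fun v k => a k - 1 - v k, ⟨fun v hv => hmaps v hv, ?_, ?_⟩, ?_⟩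
    · intro u hu v hv h
      funext k
      have h1 := hu.1.1 k
      have h2 := hv.1.1 k
      have := congrFun h k
      simp only at this
      have := ha k
      omega
    · intro u hu
      refine ⟨fun k => a k - 1 - u k, hmaps u hu, ?_⟩
      funext k
      have h1 := hu.1.1 k
      have := ha k
      simp only
      omega
    · intro v hv
      funext k
      have h1 := hv.1.1 k
      have := ha k
      simp only [Pi.add_apply]
      omega
end

section
/- Let R = S/(x_1^{a_1+1},...,x_n^{a_n+1}) with 1 ≤ a_1 ≤ ... ≤ a_n, n its graded maximal ideal, and let 1 ≤ k ≤ a_1. Let I_k be the poset ideal of the divisor poset P of R/(0:n^k) generated by the monomials x_1^{b_1}···x_n^{b_n} with 0 ≤ b_i ≤ a_i and ∑ b_i = k. Then I_k is a symmetric poset ideal of P. -/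
/-- The divisor poset of `R/(0 : n^k)` where `R = S/(x_1^{a_1+1},…,x_n^{a_n+1})`:
monomials `x^c` with `c ≤ a` that do not annihilate `n^k`, i.e. such that some
degree-`k` multiple of `x^c` survives in `R`. -/
def ciQuotPoset (n : ℕ) (a : Fin n → ℕ) (k : ℕ) : Set (Fin n → ℕ) :=
  {c | c ≤ a ∧ ∃ d : Fin n → ℕ, (∑ i, d i) = k ∧ c + d ≤ a}

/-- The poset ideal `I_k`: generated by the monomials `x^g` with `g ≤ a` of total
degree `k`. -/
def ciQuotIdeal (n : ℕ) (a : Fin n → ℕ) (k : ℕ) : Set (Fin n → ℕ) :=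
  {c ∈ ciQuotPoset n a k | ∃ g : Fin n → ℕ, g ≤ a ∧ (∑ i, g i) = k ∧ g ≤ c}

/-- For `R = S/(x_1^{a_1+1},…,x_n^{a_n+1})` with `1 ≤ a_1 ≤ ⋯ ≤ a_n` and `1 ≤ k ≤ a_1`,
the poset ideal `I_k` of the divisor poset of `R/(0 : n^k)` generated by the monomials of
total degree `k` is symmetric. -/
theorem stmt12 (n : ℕ) (a : Fin n → ℕ) (k : ℕ)
    (ha : ∀ i, 1 ≤ a i) (hmono : ∀ i j : Fin n, i ≤ j → a i ≤ a j)
    (hk : 1 ≤ k) (hka : ∀ i, k ≤ a i) :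
    IsSymmetricIdeal (ciQuotIdeal n a k) := by
  have hmaps : ∀ c ∈ ciQuotIdeal n a k, a - c ∈ ciQuotIdeal n a k := by
    rintro c ⟨⟨hca, d, hd, hcd⟩, g, hga, hg, hgc⟩
    refine ⟨⟨fun i => Nat.sub_le _ _, g, hg, fun i => ?_⟩,
      d, fun i => ?_, hd, fun i => ?_⟩ <;>
      [skip; skip; skip] <;>
      have h1 := hcd i <;> have h2 := hca i <;> have h3 := hgc i <;>
      simp only [Pi.add_apply, Pi.sub_apply] at * <;> omega
  have hinv : ∀ c ∈ ciQuotIdeal n a k, a - (a - c) = c := by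
    rintro c ⟨⟨hca, -⟩, -⟩
    funext i
    simp only [Pi.sub_apply]
    exact Nat.sub_sub_self (hca i)
  refine ⟨a, fun c => a - c, ⟨hmaps, fun u hu v hv h => ?_,
    fun c hc => ⟨a - c, hmaps c hc, hinv c hc⟩⟩, fun v hv => ?_⟩
  · have := congrArg (a - ·) h
    simpa [hinv u hu, hinv v hv] using this
  · obtain ⟨⟨hva, -⟩, -⟩ := hv
    funext i
    simp only [Pi.add_apply, Pi.sub_apply]
    exact Nat.sub_add_cancel (hva i)
end

section
/- Let Δ be a flag simplicial complex on [n] and P_Δ the divisor poset of K{Δ} = S/(I_Δ, x_1^2,...,x_n^2). Then the trace tr(P_Δ*) (the union of all τ-ideals of P_Δ) is the poset ideal generated by the monomials u_F for which F is a free face of Δ. -/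
/-- A simplicial complex on the vertex set `Fin n`: downward closed and containing all
vertices. -/
def IsComplexOn (n : ℕ) (Δ : Set (Finset (Fin n))) : Prop :=
  (∀ F ∈ Δ, ∀ G : Finset (Fin n), G ⊆ F → G ∈ Δ) ∧ ∀ i : Fin n, {i} ∈ Δ

/-- `Δ` is flag: every minimal non-face has cardinality `2`. -/
def IsFlag (n : ℕ) (Δ : Set (Finset (Fin n))) : Prop :=
  ∀ F : Finset (Fin n), F ∉ Δ →
    ∃ i j : Fin n, i ≠ j ∧ ({i, j} : Finset (Fin n)) ⊆ F ∧ ({i, j} : Finset (Fin n)) ∉ Δ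

/-- A facet: a maximal face of `Δ`. -/
def IsFacet (n : ℕ) (Δ : Set (Finset (Fin n))) (F : Finset (Fin n)) : Prop :=
  F ∈ Δ ∧ ∀ G ∈ Δ, F ⊆ G → G = F

/-- A free face: a face contained in a unique facet. -/
def IsFreeFace (n : ℕ) (Δ : Set (Finset (Fin n))) (F : Finset (Fin n)) : Prop :=
  F ∈ Δ ∧ ∃! G : Finset (Fin n), IsFacet n Δ G ∧ F ⊆ G

/-- The squarefree monomial `u_F = ∏_{i ∈ F} x_i` as an exponent vector. -/
def indic {n : ℕ} (F : Finset (Fin n)) : Fin n → ℕ := fun i => if i ∈ F then 1 else 0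

/-- The divisor poset `P_Δ` of `K{Δ} = S/(I_Δ, x_1^2,…,x_n^2)`: the exponent vectors of
the monomials `u_F`, `F ∈ Δ`. -/
def complexPoset (n : ℕ) (Δ : Set (Finset (Fin n))) : Set (Fin n → ℕ) :=
  {v | ∃ F ∈ Δ, v = indic F}

/-- A τ-ideal of `P_Δ`: a poset ideal admitting a companion poset ideal. -/
def IsTauIdealOf (n : ℕ) (Δ : Set (Finset (Fin n))) (I : Set (Fin n → ℕ)) : Prop :=
  IsPosetIdealOf (complexPoset n Δ) I ∧
    ∃ J, IsPosetIdealOf (complexPoset n Δ) J ∧ AreCompanions I J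

/-- The trace `tr(P_Δ*)`: the union of all τ-ideals of `P_Δ`. -/
def traceSet (n : ℕ) (Δ : Set (Finset (Fin n))) : Set (Fin n → ℕ) :=
  {v | ∃ I, IsTauIdealOf n Δ I ∧ v ∈ I}


/-! ### Auxiliary lemmas -/

lemma aux_indic_le_one {n : ℕ} (F : Finset (Fin n)) (i : Fin n) : indic F i ≤ 1 := by
  unfold indic; split <;> simp

lemma aux_indic_eq_one {n : ℕ} {F : Finset (Fin n)} {i : Fin n} (h : i ∈ F) :
    indic F i = 1 := if_pos h

lemma aux_indic_eq_zero {n : ℕ} {F : Finset (Fin n)} {i : Fin n} (h : i ∉ F) :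
    indic F i = 0 := if_neg h

lemma aux_mem_of_indic {n : ℕ} {F : Finset (Fin n)} {i : Fin n} (h : indic F i ≠ 0) :
    i ∈ F := by
  by_contra hc; exact h (if_neg hc)

lemma aux_indic_le_iff {n : ℕ} {F G : Finset (Fin n)} : indic F ≤ indic G ↔ F ⊆ G := by
  constructor
  · intro h i hi
    have h1 := h i
    rw [aux_indic_eq_one hi] at h1
    exact aux_mem_of_indic (Nat.one_le_iff_ne_zero.mp h1)
  · intro h i
    by_cases hi : i ∈ F
    · rw [aux_indic_eq_one hi, aux_indic_eq_one (h hi)]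
    · rw [aux_indic_eq_zero hi]; exact Nat.zero_le _

lemma aux_exists_facet (n : ℕ) (Δ : Set (Finset (Fin n))) {H : Finset (Fin n)}
    (hH : H ∈ Δ) : ∃ G, IsFacet n Δ G ∧ H ⊆ G := by
  obtain ⟨G, hG, hmax⟩ := Set.Finite.exists_maximalFor Finset.card
    {G | G ∈ Δ ∧ H ⊆ G} (Set.toFinite _) ⟨H, hH, subset_rfl⟩
  refine ⟨G, ⟨hG.1, ?_⟩, hG.2⟩
  intro G' hG' hGG'
  have hcard := hmax ⟨hG', hG.2.trans hGG'⟩ (Finset.card_le_card hGG')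
  exact (Finset.eq_of_subset_of_card_le hGG' hcard).symm

/-- Key lemma (hard direction): any face whose indicator vector belongs to a
τ-ideal is itself a free face. -/
lemma aux_free_of_mem_tau (n : ℕ) (Δ : Set (Finset (Fin n))) (hΔ : IsComplexOn n Δ)
    (hflag : IsFlag n Δ) (I : Set (Fin n → ℕ)) (hI : IsTauIdealOf n Δ I)
    {H : Finset (Fin n)} (hHΔ : H ∈ Δ) (hHI : indic H ∈ I) : IsFreeFace n Δ H := by
  obtain ⟨⟨hIP, hIup⟩, J, ⟨hJP, hJup⟩, m, f, hbij, hsum⟩ := hI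
  -- every member of I has a "partner" face
  have partner : ∀ u ∈ I, ∃ G ∈ Δ, ∀ i, u i + indic G i = m i := by
    intro u hu
    obtain ⟨w, hwJ, hfw⟩ := hbij.2.2 hu
    obtain ⟨G, hGΔ, rfl⟩ := hJP hwJ
    exact ⟨G, hGΔ, fun i => by
      have := congrFun (hsum _ hwJ) i
      simp only [Pi.add_apply] at this
      rw [hfw] at this
      omega⟩
  obtain ⟨G₀, hG₀Δ, hG₀⟩ := partner _ hHI
  -- facets containing H are in I
  have mem_I : ∀ {G : Finset (Fin n)}, G ∈ Δ → H ⊆ G → indic G ∈ I := by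
    intro G hGΔ hHG
    exact hIup _ hHI _ ⟨G, hGΔ, rfl⟩ (aux_indic_le_iff.mpr hHG)
  -- key: a vertex in some member face of I but not in H lies in G₀
  have mem_G₀ : ∀ {G : Finset (Fin n)} {k : Fin n}, G ∈ Δ → H ⊆ G → k ∈ G → k ∉ H →
      k ∈ G₀ := by
    intro G k hGΔ hHG hkG hkH
    obtain ⟨D, hDΔ, hD⟩ := partner _ (mem_I hGΔ hHG)
    have h1 := hD k
    have h2 := hG₀ k
    rw [aux_indic_eq_one hkG] at h1
    rw [aux_indic_eq_zero hkH] at h2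
    have h3 := aux_indic_le_one G₀ k
    apply aux_mem_of_indic (F := G₀) (i := k)
    omega
  -- uniqueness of facet containing H
  have uniq : ∀ G₁ G₂ : Finset (Fin n), IsFacet n Δ G₁ → IsFacet n Δ G₂ →
      H ⊆ G₁ → H ⊆ G₂ → G₁ ⊆ G₂ := by
    intro G₁ G₂ hF₁ hF₂ hHG₁ hHG₂ k hkG₁
    by_contra hkG₂
    have hkH : k ∉ H := fun h => hkG₂ (hHG₂ h)
    have hins : insert k G₂ ∉ Δ := by
      intro hc
      exact hkG₂ ((hF₂.2 _ hc (Finset.subset_insert _ _)) ▸ Finset.mem_insert_self k G₂)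
    obtain ⟨i, j, hij, hsub, hnot⟩ := hflag _ hins
    -- one of i, j is k; the other is in G₂ \ G₁
    have hi : i ∈ insert k G₂ := hsub (Finset.mem_insert_self i {j})
    have hj : j ∈ insert k G₂ := hsub (by simp)
    have hnotboth : ¬ (i ∈ G₂ ∧ j ∈ G₂) := by
      rintro ⟨h1, h2⟩
      exact hnot (hΔ.1 _ hF₂.1 _ (by intro x hx; simp at hx; rcases hx with rfl | rfl <;> assumption))
    -- wlog analysis
    rcases Finset.mem_insert.mp hi with rfl | hiG₂
    · -- i = k
      have hjG₂ : j ∈ G₂ := by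
        rcases Finset.mem_insert.mp hj with rfl | h
        · exact absurd rfl hij
        · exact h
      have hjG₁ : j ∉ G₁ := by
        intro hc
        exact hnot (hΔ.1 _ hF₁.1 _ (by intro x hx; simp at hx; rcases hx with rfl | rfl <;> assumption))
      have hjH : j ∉ H := fun h => hjG₁ (hHG₁ h)
      have hk0 : i ∈ G₀ := mem_G₀ hF₁.1 hHG₁ hkG₁ hkH
      have hj0 : j ∈ G₀ := mem_G₀ hF₂.1 hHG₂ hjG₂ hjH
      exact hnot (hΔ.1 _ hG₀Δ _ (by intro x hx; simp at hx; rcases hx with rfl | rfl <;> assumption))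
    · -- i ∈ G₂, so j = k
      have hjk : j = k := by
        rcases Finset.mem_insert.mp hj with rfl | h
        · rfl
        · exact absurd ⟨hiG₂, h⟩ hnotboth
      subst hjk
      have hiG₁ : i ∉ G₁ := by
        intro hc
        exact hnot (hΔ.1 _ hF₁.1 _ (by intro x hx; simp at hx; rcases hx with rfl | rfl <;> assumption))
      have hiH : i ∉ H := fun h => hiG₁ (hHG₁ h)
      have hk0 : j ∈ G₀ := mem_G₀ hF₁.1 hHG₁ hkG₁ hkH
      have hi0 : i ∈ G₀ := mem_G₀ hF₂.1 hHG₂ hiG₂ hiH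
      exact hnot (hΔ.1 _ hG₀Δ _ (by intro x hx; simp at hx; rcases hx with rfl | rfl <;> assumption))
  obtain ⟨G, hGfacet, hHG⟩ := aux_exists_facet n Δ hHΔ
  refine ⟨hHΔ, G, ⟨hGfacet, hHG⟩, ?_⟩
  rintro G' ⟨hG'facet, hHG'⟩
  exact Finset.Subset.antisymm (uniq G' G hG'facet hGfacet hHG' hHG)
    (uniq G G' hGfacet hG'facet hHG hHG')

/-- For a flag simplicial complex `Δ`, the trace `tr(P_Δ*)` is the poset ideal of `P_Δ`
generated by the monomials `u_F` with `F` a free face of `Δ`. -/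
theorem stmt15 (n : ℕ) (Δ : Set (Finset (Fin n))) (hΔ : IsComplexOn n Δ)
    (hflag : IsFlag n Δ) :
    traceSet n Δ =
      {v | ∃ F H : Finset (Fin n), IsFreeFace n Δ F ∧ H ∈ Δ ∧ F ⊆ H ∧ v = indic H} := by
  ext v
  constructor
  · rintro ⟨I, hI, hvI⟩
    obtain ⟨H, hHΔ, rfl⟩ := hI.1.1 hvI
    exact ⟨H, H, aux_free_of_mem_tau n Δ hΔ hflag I hI hHΔ hvI, hHΔ, subset_rfl, rfl⟩
  · rintro ⟨F, H, ⟨hFΔ, G, ⟨hGfacet, hFG⟩, hGuniq⟩, hHΔ, hFH, rfl⟩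
    -- every face containing F is contained in G
    have hsubG : ∀ {H' : Finset (Fin n)}, H' ∈ Δ → F ⊆ H' → H' ⊆ G := by
      intro H' hH'Δ hFH'
      obtain ⟨G', hG'facet, hH'G'⟩ := aux_exists_facet n Δ hH'Δ
      have : G' = G := hGuniq G' ⟨hG'facet, hFH'.trans hH'G'⟩
      exact this ▸ hH'G'
    set m : Fin n → ℕ := indic F + indic G with hm
    set I : Set (Fin n → ℕ) := {w | ∃ H', H' ∈ Δ ∧ F ⊆ H' ∧ w = indic H'} with hIdef
    have hle : ∀ {H' : Finset (Fin n)}, H' ∈ Δ → F ⊆ H' → ∀ i, indic H' i ≤ m i := by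
      intro H' hH'Δ hFH' i
      have h1 := aux_indic_le_one H' i
      by_cases hi : i ∈ H'
      · have : i ∈ G := hsubG hH'Δ hFH' hi
        simp only [hm, Pi.add_apply, aux_indic_eq_one this]
        omega
      · rw [aux_indic_eq_zero hi]; exact Nat.zero_le _
    -- the reflection map
    have hrefl : ∀ {H' : Finset (Fin n)}, H' ∈ Δ → F ⊆ H' →
        m - indic H' = indic (F ∪ (G \ H')) := by
      intro H' hH'Δ hFH'
      have hH'G := hsubG hH'Δ hFH'
      funext i
      simp only [Pi.sub_apply, hm, Pi.add_apply]
      by_cases hiF : i ∈ F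
      · have hiH' : i ∈ H' := hFH' hiF
        rw [aux_indic_eq_one hiF, aux_indic_eq_one (hH'G hiH'), aux_indic_eq_one hiH',
          aux_indic_eq_one (Finset.mem_union_left _ hiF)]
      · rw [aux_indic_eq_zero hiF]
        by_cases hiH' : i ∈ H'
        · rw [aux_indic_eq_one (hH'G hiH'), aux_indic_eq_one hiH',
            aux_indic_eq_zero (by simp [hiF, hiH'])]
        · by_cases hiG : i ∈ G
          · rw [aux_indic_eq_one hiG, aux_indic_eq_zero hiH',
              aux_indic_eq_one (Finset.mem_union_right _ (Finset.mem_sdiff.mpr ⟨hiG, hiH'⟩))]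
          · rw [aux_indic_eq_zero hiG, aux_indic_eq_zero hiH',
              aux_indic_eq_zero (by simp [hiF, hiG])]
    have hmapsto : ∀ w ∈ I, m - w ∈ I := by
      rintro w ⟨H', hH'Δ, hFH', rfl⟩
      rw [hrefl hH'Δ hFH']
      refine ⟨F ∪ (G \ H'), ?_, Finset.subset_union_left, rfl⟩
      exact hΔ.1 _ hGfacet.1 _ (Finset.union_subset (hFG) (Finset.sdiff_subset))
    have hwle : ∀ w ∈ I, ∀ i, w i ≤ m i := by
      rintro w ⟨H', hH'Δ, hFH', rfl⟩ i
      exact hle hH'Δ hFH' i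
    have hideal : IsPosetIdealOf (complexPoset n Δ) I := by
      constructor
      · rintro w ⟨H', hH'Δ, _, rfl⟩; exact ⟨H', hH'Δ, rfl⟩
      · rintro u ⟨H', hH'Δ, hFH', rfl⟩ w ⟨H'', hH''Δ, rfl⟩ huw
        exact ⟨H'', hH''Δ, hFH'.trans (aux_indic_le_iff.mp huw), rfl⟩
    refine ⟨I, ⟨hideal, I, hideal, m, fun w => m - w, ⟨hmapsto, ?_, ?_⟩, ?_⟩,
      H, hHΔ, hFH, rfl⟩
    · -- injective
      intro w₁ h₁ w₂ h₂ heq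
      funext i
      have e1 := hwle _ h₁ i
      have e2 := hwle _ h₂ i
      have := congrFun heq i
      simp only [Pi.sub_apply] at this
      omega
    · -- surjective
      intro u hu
      refine ⟨m - u, hmapsto _ hu, ?_⟩
      funext i
      have := hwle _ hu i
      simp only [Pi.sub_apply]
      omega
    · -- sum condition
      intro w hw
      funext i
      have := hwle _ hw i
      simp only [Pi.add_apply, Pi.sub_apply]
      omega
end

section
/- Let P be a finite poset, L = J(P) its lattice of poset ideals ordered by inclusion, and Δ(L) the order complex of L. Let π be a linear extension of P, C_π the corresponding maximal chain of L, and C_π^♯ the chain of ideals α_q = {a_{i_1},...,a_{i_{j(q)}}} obtained from the ascent decomposition of π. If C is a chain of L such that C_π is the unique maximal chain of L containing C, then C_π^♯ ⊆ C. -/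
/-- A poset ideal (downward closed subset) of a poset `α`. -/
def IsPosetIdeal {α : Type*} [PartialOrder α] (I : Set α) : Prop :=
  ∀ x ∈ I, ∀ y, y ≤ x → y ∈ I

/-- A chain of the distributive lattice `L = J(P)` of poset ideals of `α`, ordered by
inclusion. -/
def IsIdealChain {α : Type*} [PartialOrder α] (M : Set (Set α)) : Prop :=
  (∀ I ∈ M, IsPosetIdeal I) ∧ IsChain (· ⊆ ·) M

/-- A maximal chain of `L = J(P)`. -/
def IsMaxIdealChain {α : Type*} [PartialOrder α] (M : Set (Set α)) : Prop :=
  IsIdealChain M ∧ ∀ M' : Set (Set α), IsIdealChain M' → M ⊆ M' → M' = M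

/-- The poset ideal `{a_{i_1}, …, a_{i_j}}` consisting of the first `j` elements of the
linear extension `e`. -/
def prefixIdeal {α : Type*} {n : ℕ} (e : Fin n ≃ α) (j : ℕ) : Set α :=
  {x | ((e.symm x : Fin n) : ℕ) < j}

/-- The maximal chain `C_π` of `L = J(P)` associated with the linear extension `e`. -/
def maxChainOf {α : Type*} {n : ℕ} (e : Fin n ≃ α) : Set (Set α) :=
  {S | ∃ j ≤ n, S = prefixIdeal e j}

/-- The chain `C_π^♯` of `C_π`: the proper prefixes ending at the ascent breaks of the
linear extension `e` (positions `j` with `1 ≤ j ≤ n-1` where `a_{i_j} < a_{i_{j+1}}`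
fails). -/
def sharpChainOf {α : Type*} [PartialOrder α] {n : ℕ} (e : Fin n ≃ α) : Set (Set α) :=
  {S | ∃ i : Fin n, 0 < (i : ℕ) ∧ ¬ e ⟨(i : ℕ) - 1, Nat.lt_of_le_of_lt (Nat.sub_le _ _) i.isLt⟩ < e i ∧ S = prefixIdeal e (i : ℕ)}

lemma prefix_sub {α : Type*} {n : ℕ} (e : Fin n ≃ α) {j j' : ℕ} (h : j ≤ j') :
    prefixIdeal e j ⊆ prefixIdeal e j' := fun _ hx => lt_of_lt_of_le hx h

lemma maxChain_isIdealChain {α : Type*} [PartialOrder α] {n : ℕ} (e : Fin n ≃ α)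
    (hlin : ∀ i j : Fin n, e i < e j → i < j) : IsIdealChain (maxChainOf e) := by
  constructor
  · rintro I ⟨j, hj, rfl⟩ x hx y hy
    rcases eq_or_lt_of_le hy with rfl | hlt
    · exact hx
    · have h := hlin (e.symm y) (e.symm x) (by simpa using hlt)
      have h' : ((e.symm y : Fin n) : ℕ) < ((e.symm x : Fin n) : ℕ) := h
      simp only [prefixIdeal, Set.mem_setOf_eq] at hx ⊢
      omega
  · rintro I ⟨j, hj, rfl⟩ J ⟨j', hj', rfl⟩ _
    rcases le_total j j' with h | h
    · exact Or.inl (prefix_sub e h)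
    · exact Or.inr (prefix_sub e h)

lemma comparable_prefix {α : Type*} {n : ℕ} (e : Fin n ≃ α) (I : Set α)
    (h : ∀ j ≤ n, I ⊆ prefixIdeal e j ∨ prefixIdeal e j ⊆ I) :
    ∃ j ≤ n, I = prefixIdeal e j := by
  classical
  have down : ∀ k : Fin n, e k ∈ I → ∀ m : Fin n, m < k → e m ∈ I := by
    intro k hk m hm
    have hm' : (m : ℕ) < (k : ℕ) := hm
    rcases h ((m : ℕ) + 1) m.isLt with h1 | h1
    · have h2 := h1 hk
      simp only [prefixIdeal, Set.mem_setOf_eq, Equiv.symm_apply_apply] at h2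
      omega
    · exact h1 (by simp [prefixIdeal])
  by_cases hall : ∀ k : Fin n, e k ∈ I
  · refine ⟨n, le_rfl, ?_⟩
    ext x
    simp only [prefixIdeal, Set.mem_setOf_eq]
    constructor
    · intro _; exact (e.symm x).isLt
    · intro _; simpa using hall (e.symm x)
  · push_neg at hall
    obtain ⟨k0, hk0⟩ := hall
    have hex : ∃ m : ℕ, ∃ hm : m < n, e ⟨m, hm⟩ ∉ I := ⟨k0, k0.isLt, by simpa⟩
    obtain ⟨hmn, hmI⟩ := Nat.find_spec hex
    refine ⟨Nat.find hex, le_of_lt hmn, ?_⟩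
    ext x
    simp only [prefixIdeal, Set.mem_setOf_eq]
    constructor
    · intro hx
      by_contra hge
      push_neg at hge
      rcases eq_or_lt_of_le hge with heq | hlt
      · apply hmI
        have hfin : (⟨Nat.find hex, hmn⟩ : Fin n) = e.symm x := Fin.ext heq
        rw [hfin]; simpa using hx
      · exact hmI (down (e.symm x) (by simpa using hx) ⟨Nat.find hex, hmn⟩
          (by simpa [Fin.lt_def] using hlt))
    · intro hx
      have hmin := Nat.find_min hex (m := ((e.symm x : Fin n) : ℕ)) hx
      push_neg at hmin
      have h3 := hmin (e.symm x).isLt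
      simpa using h3

lemma maxChain_isMax {α : Type*} [PartialOrder α] {n : ℕ} (e : Fin n ≃ α)
    (hlin : ∀ i j : Fin n, e i < e j → i < j) : IsMaxIdealChain (maxChainOf e) := by
  refine ⟨maxChain_isIdealChain e hlin, ?_⟩
  intro M' hM' hsub
  apply Set.Subset.antisymm _ hsub
  intro I hI
  obtain ⟨j, hj, rfl⟩ : ∃ j ≤ n, I = prefixIdeal e j := by
    apply comparable_prefix
    intro j hj
    by_cases heq : I = prefixIdeal e j
    · exact Or.inr heq.ge
    · rcases hM'.2 hI (hsub ⟨j, hj, rfl⟩) heq with h | h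
      · exact Or.inl h
      · exact Or.inr h
  exact ⟨j, hj, rfl⟩

/-- Let `L = J(P)` be the lattice of poset ideals of a finite poset, `π` a linear extension
of `P` with associated maximal chain `C_π` and chain `C_π^♯`.  If `C` is a chain of `L`
such that `C_π` is the unique maximal chain of `L` containing `C`, then `C_π^♯ ⊆ C`. -/
theorem stmt17 {α : Type*} [PartialOrder α] [Fintype α] {n : ℕ}
    (e : Fin n ≃ α) (hlin : ∀ i j : Fin n, e i < e j → i < j)
    (C : Set (Set α)) (hC : IsIdealChain C)
    (hsub : C ⊆ maxChainOf e)
    (huniq : ∀ M : Set (Set α), IsMaxIdealChain M → C ⊆ M → M = maxChainOf e) :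
    sharpChainOf e ⊆ C := by
  rintro S ⟨i, hi, hasc, rfl⟩
  by_contra hSC
  set a : Fin n := ⟨(i : ℕ) - 1, Nat.lt_of_le_of_lt (Nat.sub_le _ _) i.isLt⟩ with hadef
  have ha : (a : ℕ) = (i : ℕ) - 1 := rfl
  set e' : Fin n ≃ α := (Equiv.swap a i).trans e with he'def
  have he'symm : ∀ x, e'.symm x = Equiv.swap a i (e.symm x) := by
    intro x; simp [he'def, Equiv.symm_trans_apply]
  have he'app : ∀ k, e' k = e (Equiv.swap a i k) := by
    intro k; simp [he'def]
  -- e' is a linear extension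
  have hlin' : ∀ k l : Fin n, e' k < e' l → k < l := by
    intro k l h
    have hs : ((Equiv.swap a i k : Fin n) : ℕ) < ((Equiv.swap a i l : Fin n) : ℕ) := by
      apply hlin
      rw [← he'app, ← he'app]; exact h
    rw [Fin.lt_def]
    by_cases hka : k = a
    · have hkv : (k : ℕ) = (a : ℕ) := by rw [hka]
      rw [hka, Equiv.swap_apply_left] at hs
      by_cases hla : l = a
      · rw [hla, Equiv.swap_apply_left] at hs; omega
      · by_cases hli : l = i
        · have hlv : (l : ℕ) = (i : ℕ) := by rw [hli]
          omega
        · rw [Equiv.swap_apply_of_ne_of_ne hla hli] at hs; omega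
    · by_cases hki : k = i
      · by_cases hla : l = a
        · -- k = i, l = a : then e a < e i, contradicting hasc
          exfalso
          apply hasc
          have hh : e' k < e' l := h
          rw [hki, hla, he'app, he'app, Equiv.swap_apply_left,
            Equiv.swap_apply_right] at hh
          exact hh
        · rw [hki, Equiv.swap_apply_right] at hs
          by_cases hli : l = i
          · rw [hli, Equiv.swap_apply_right] at hs; omega
          · rw [Equiv.swap_apply_of_ne_of_ne hla hli] at hs
            have hkv : (k : ℕ) = (i : ℕ) := by rw [hki]
            have hlv : (l : ℕ) ≠ (a : ℕ) := fun hv => hla (Fin.ext hv)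
            have hlv' : (l : ℕ) ≠ (i : ℕ) := fun hv => hli (Fin.ext hv)
            omega
      · rw [Equiv.swap_apply_of_ne_of_ne hka hki] at hs
        have hkv : (k : ℕ) ≠ (a : ℕ) := fun hv => hka (Fin.ext hv)
        have hkv' : (k : ℕ) ≠ (i : ℕ) := fun hv => hki (Fin.ext hv)
        by_cases hla : l = a
        · rw [hla, Equiv.swap_apply_left] at hs
          have hlv : (l : ℕ) = (a : ℕ) := by rw [hla]
          omega
        · by_cases hli : l = i
          · rw [hli, Equiv.swap_apply_right] at hs
            have hlv : (l : ℕ) = (i : ℕ) := by rw [hli]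
            omega
          · rw [Equiv.swap_apply_of_ne_of_ne hla hli] at hs; omega
  -- prefixes away from position i are unchanged
  have hpre : ∀ j : ℕ, j ≠ (i : ℕ) → prefixIdeal e' j = prefixIdeal e j := by
    intro j hjne
    ext x
    simp only [prefixIdeal, Set.mem_setOf_eq, he'symm]
    by_cases hk : e.symm x = a
    · rw [hk, Equiv.swap_apply_left]
      omega
    · by_cases hk' : e.symm x = i
      · rw [hk', Equiv.swap_apply_right]
        omega
      · rw [Equiv.swap_apply_of_ne_of_ne hk hk']
  have hsub' : C ⊆ maxChainOf e' := by
    intro T hT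
    obtain ⟨j, hj, rfl⟩ := hsub hT
    have hjne : j ≠ (i : ℕ) := by
      rintro rfl; exact hSC hT
    exact ⟨j, hj, (hpre j hjne).symm⟩
  have heq := huniq (maxChainOf e') (maxChain_isMax e' hlin') hsub'
  have hmem : prefixIdeal e' (i : ℕ) ∈ maxChainOf e' :=
    ⟨(i : ℕ), le_of_lt i.isLt, rfl⟩
  rw [heq] at hmem
  obtain ⟨j, hj, hjeq⟩ := hmem
  have h1 : e i ∈ prefixIdeal e' (i : ℕ) := by
    show ((e'.symm (e i) : Fin n) : ℕ) < (i : ℕ)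
    rw [he'symm, Equiv.symm_apply_apply, Equiv.swap_apply_right]
    omega
  have h2 : e a ∉ prefixIdeal e' (i : ℕ) := by
    show ¬ ((e'.symm (e a) : Fin n) : ℕ) < (i : ℕ)
    rw [he'symm, Equiv.symm_apply_apply, Equiv.swap_apply_left]
    omega
  rw [hjeq] at h1 h2
  have h1' : (i : ℕ) < j := by
    simpa [prefixIdeal] using h1
  have h2' : ¬ ((a : ℕ) < j) := by
    simpa [prefixIdeal] using h2
  omega
end

section
/- Let n ≥ 2, let Δ(P_n) be the independence complex of the path graph P_n, and let F = {a_1 < ··· < a_s} ⊆ [n] be an independent set. Then F is a free face of Δ(P_n) and is minimal among the free faces contained in its unique containing facet if and only if F is τ-permissible, i.e.: (i) a_{i+1} − a_i ∈ {2,3,4} for all 1 ≤ i < s (with a_0 = −1, a_{s+1} = n+2 and a_1 − a_0 ∈ {2,3,4}, a_{s+1} − a_s ∈ {2,3,4}), and (ii) there is no index i with a_{i+1} − a_i = 2 and a_i − a_{i−1} = 2. -/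
/-- A subset of the vertex set `{1,…,n}` (viewed inside `ℤ`) is independent in the path
graph `P_n` iff its elements are pairwise at distance at least `2`. -/
def PathIndep (G : Finset ℤ) : Prop :=
  ∀ x ∈ G, ∀ y ∈ G, x ≠ y → 2 ≤ |x - y|

/-- `G ⊆ [n]`. -/
def InVertexRange (n : ℕ) (G : Finset ℤ) : Prop := ∀ x ∈ G, 1 ≤ x ∧ x ≤ (n : ℤ)

/-- A facet of the independence complex `Δ(P_n)`: a maximal independent set of `P_n`. -/
def IsPathFacet (n : ℕ) (G : Finset ℤ) : Prop :=
  InVertexRange n G ∧ PathIndep G ∧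
    ∀ G' : Finset ℤ, InVertexRange n G' → PathIndep G' → G ⊆ G' → G' = G

/-- A free face of `Δ(P_n)`: a face contained in a unique facet. -/
def IsPathFreeFace (n : ℕ) (F : Finset ℤ) : Prop :=
  InVertexRange n F ∧ PathIndep F ∧ ∃! G : Finset ℤ, IsPathFacet n G ∧ F ⊆ G

theorem pathIndep_subset {F G : Finset ℤ} (h : F ⊆ G) (hG : PathIndep G) : PathIndep F :=
  fun x hx y hy hxy => hG x (h hx) y (h hy) hxy

theorem inVertexRange_subset {n : ℕ} {F G : Finset ℤ} (h : F ⊆ G) (hG : InVertexRange n G) :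
    InVertexRange n F := fun x hx => hG x (h hx)

theorem path_extend (n : ℕ) (F : Finset ℤ) (hr : InVertexRange n F) (hi : PathIndep F) :
    ∃ K, IsPathFacet n K ∧ F ⊆ K := by
  classical
  set S := (Finset.Icc (1:ℤ) n).powerset.filter (fun G => PathIndep G ∧ F ⊆ G) with hS
  have hFS : F ∈ S := by
    simp only [hS, Finset.mem_filter, Finset.mem_powerset]
    exact ⟨fun x hx => Finset.mem_Icc.2 (hr x hx), hi, Finset.Subset.refl F⟩
  obtain ⟨K, hK, hmax⟩ := S.exists_max_image Finset.card ⟨F, hFS⟩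
  simp only [hS, Finset.mem_filter, Finset.mem_powerset] at hK
  refine ⟨K, ⟨fun x hx => Finset.mem_Icc.1 (hK.1 hx), hK.2.1, ?_⟩, hK.2.2⟩
  intro G' hG'r hG'i hKG'
  have hG'S : G' ∈ S := by
    simp only [hS, Finset.mem_filter, Finset.mem_powerset]
    exact ⟨fun x hx => Finset.mem_Icc.2 (hG'r x hx), hG'i, hK.2.2.trans hKG'⟩
  exact (Finset.eq_of_subset_of_card_le hKG' (hmax G' hG'S)).symm

theorem path_notFree (n : ℕ) (F : Finset ℤ) (hr : InVertexRange n F) (hi : PathIndep F)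
    (b c : ℤ) (hb : b = -1 ∨ b ∈ F) (hc : c = (n:ℤ)+2 ∨ c ∈ F) (hbc : 5 ≤ c - b)
    (hmid : ∀ x ∈ F, ¬ (b < x ∧ x < c)) : ¬ IsPathFreeFace n F := by
  rintro ⟨-, -, hEU⟩
  obtain ⟨G, ⟨hGf, hFG⟩, huniq⟩ := hEU
  have hb1 : -1 ≤ b := by rcases hb with rfl | h
                          · exact le_refl _
                          · linarith [(hr b h).1]
  have hc1 : c ≤ (n:ℤ)+2 := by rcases hc with rfl | h
                               · exact le_refl _
                               · linarith [(hr c h).2]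
  have hside : ∀ x ∈ F, x ≤ b ∨ c ≤ x := by intro x hx; have := hmid x hx; omega
  have key : ∀ d : ℤ, b+2 ≤ d → d ≤ b+3 → ∃ K, IsPathFacet n K ∧ insert d F ⊆ K := by
    intro d h1 h2
    apply path_extend
    · intro x hx
      rcases Finset.mem_insert.1 hx with rfl | hx
      · omega
      · exact hr x hx
    · intro x hx y hy hxy
      rcases Finset.mem_insert.1 hx with hx' | hx'
      · rcases Finset.mem_insert.1 hy with hy' | hy'
        · exact absurd (hx'.trans hy'.symm) hxy
        · have := hside y hy'; rw [le_abs]; omega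
      · rcases Finset.mem_insert.1 hy with hy' | hy'
        · have := hside x hx'; rw [le_abs]; omega
        · exact hi x hx' y hy' hxy
  obtain ⟨K1, hK1, hK1s⟩ := key (b+2) (by omega) (by omega)
  obtain ⟨K2, hK2, hK2s⟩ := key (b+3) (by omega) (by omega)
  have e1 : K1 = G := huniq K1 ⟨hK1, fun x hx => hK1s (Finset.mem_insert_of_mem hx)⟩
  have e2 : K2 = G := huniq K2 ⟨hK2, fun x hx => hK2s (Finset.mem_insert_of_mem hx)⟩
  have m1 : b+2 ∈ G := e1 ▸ hK1s (Finset.mem_insert_self _ _)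
  have m2 : b+3 ∈ G := e2 ▸ hK2s (Finset.mem_insert_self _ _)
  have := hGf.2.1 _ m1 _ m2 (by omega)
  rw [le_abs] at this; omega


theorem exists_left (F : Finset ℤ) (x lo : ℤ) (hlo : lo < x) :
    ∃ b : ℤ, (b = lo ∨ b ∈ F) ∧ b < x ∧ ∀ y ∈ F, y < x → y ≤ b := by
  classical
  by_cases h : (F.filter (fun y => y < x)).Nonempty
  · refine ⟨(F.filter (fun y => y < x)).max' h, ?_, ?_, ?_⟩
    · exact Or.inr (Finset.mem_filter.1 (Finset.max'_mem _ h)).1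
    · exact (Finset.mem_filter.1 (Finset.max'_mem _ h)).2
    · intro y hy hyx
      have hm : y ∈ F.filter (fun y => y < x) := Finset.mem_filter.2 ⟨hy, hyx⟩
      exact Finset.le_max' (F.filter (fun y => y < x)) y hm
  · refine ⟨lo, Or.inl rfl, hlo, fun y hy hyx => absurd ?_ h⟩
    have hm : y ∈ F.filter (fun y => y < x) := Finset.mem_filter.2 ⟨hy, hyx⟩
    exact ⟨y, hm⟩

theorem exists_right (F : Finset ℤ) (x hi : ℤ) (hhi : x < hi) :
    ∃ c : ℤ, (c = hi ∨ c ∈ F) ∧ x < c ∧ ∀ y ∈ F, x < y → c ≤ y := by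
  classical
  by_cases h : (F.filter (fun y => x < y)).Nonempty
  · refine ⟨(F.filter (fun y => x < y)).min' h, ?_, ?_, ?_⟩
    · exact Or.inr (Finset.mem_filter.1 (Finset.min'_mem _ h)).1
    · exact (Finset.mem_filter.1 (Finset.min'_mem _ h)).2
    · intro y hy hyx
      have hm : y ∈ F.filter (fun y => x < y) := Finset.mem_filter.2 ⟨hy, hyx⟩
      exact Finset.min'_le (F.filter (fun y => x < y)) y hm
  · refine ⟨hi, Or.inl rfl, hhi, fun y hy hyx => absurd ?_ h⟩
    have hm : y ∈ F.filter (fun y => x < y) := Finset.mem_filter.2 ⟨hy, hyx⟩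
    exact ⟨y, hm⟩

theorem exists_G (n : ℕ) (F : Finset ℤ) :
    ∃ G : Finset ℤ, ∀ x : ℤ, x ∈ G ↔ x ∈ F ∨ ∃ b : ℤ, (b = -1 ∨ b ∈ F) ∧
      (b + 4 = (n:ℤ)+2 ∨ b + 4 ∈ F) ∧ (∀ y ∈ F, ¬ (b < y ∧ y < b + 4)) ∧ x = b + 2 := by
  classical
  refine ⟨F ∪ ((insert (-1:ℤ) F).filter
      (fun b => (b + 4 = (n:ℤ)+2 ∨ b + 4 ∈ F) ∧ ∀ x ∈ F, ¬ (b < x ∧ x < b + 4))).image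
      (fun b => b + 2), fun x => ?_⟩
  simp only [Finset.mem_union, Finset.mem_image, Finset.mem_filter, Finset.mem_insert]
  constructor
  · rintro (h | ⟨b, ⟨hb, h1, h2⟩, he⟩)
    · exact Or.inl h
    · exact Or.inr ⟨b, hb, h1, h2, he.symm⟩
  · rintro (h | ⟨b, hb, h1, h2, he⟩)
    · exact Or.inl h
    · exact Or.inr ⟨b, ⟨hb, h1, h2⟩, he.symm⟩

theorem path_free (n : ℕ) (F : Finset ℤ) (hr : InVertexRange n F) (hi : PathIndep F)
    (gap : ∀ b c : ℤ, (b = -1 ∨ b ∈ F) → (c = (n:ℤ)+2 ∨ c ∈ F) → b < c →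
      (∀ x ∈ F, ¬ (b < x ∧ x < c)) → c - b ≤ 4) : IsPathFreeFace n F := by
  obtain ⟨G, hGmem⟩ := exists_G n F
  have hGr : InVertexRange n G := by
    intro x hx
    rcases (hGmem x).1 hx with h | ⟨b, hb, h1, h2, rfl⟩
    · exact hr x h
    · constructor
      · rcases hb with rfl | h
        · norm_num
        · linarith [(hr b h).1]
      · rcases h1 with h1 | h1
        · omega
        · linarith [(hr _ h1).2]
  have hGi : PathIndep G := by
    intro x hx y hy hxy
    rw [le_abs]
    rcases (hGmem x).1 hx with hxF | ⟨b, hb, hb1, hb2, rfl⟩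
    · rcases (hGmem y).1 hy with hyF | ⟨b', hb', hb1', hb2', rfl⟩
      · have := hi x hxF y hyF hxy; rw [le_abs] at this; omega
      · have := hb2' x hxF; omega
    · rcases (hGmem y).1 hy with hyF | ⟨b', hb', hb1', hb2', rfl⟩
      · have := hb2 y hyF; omega
      · have hbb' : b ≠ b' := fun h => hxy (by rw [h])
        rcases hb with rfl | hbF
        · rcases hb' with rfl | hb'F
          · exact (hbb' rfl).elim
          · have := hb2 b' hb'F
            have := (hr b' hb'F).1
            omega
        · rcases hb' with rfl | hb'F
          · have := hb2' b hbF
            have := (hr b hbF).1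
            omega
          · have h1 := hb2 b' hb'F
            have h2 := hb2' b hbF
            omega
  have hFG : F ⊆ G := fun x hx => (hGmem x).2 (Or.inl hx)
  have hA : ∀ H : Finset ℤ, InVertexRange n H → PathIndep H → F ⊆ H → H ⊆ G := by
    intro H hHr hHi hFH x hx
    by_cases hxF : x ∈ F
    · exact hFG hxF
    obtain ⟨b, hbF', hbx, hble⟩ := exists_left F x (-1) (by linarith [(hHr x hx).1])
    obtain ⟨c, hcF', hxc, hcge⟩ := exists_right F x ((n:ℤ)+2) (by linarith [(hHr x hx).2])
    have hmidbc : ∀ y ∈ F, ¬ (b < y ∧ y < c) := by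
      rintro y hy ⟨h1, h2⟩
      rcases lt_trichotomy y x with h | h | h
      · have := hble y hy h; omega
      · exact hxF (h ▸ hy)
      · have := hcge y hy h; omega
    have hgap := gap b c hbF' hcF' (by omega) hmidbc
    have hbx2 : b + 2 ≤ x := by
      rcases hbF' with rfl | h
      · linarith [(hHr x hx).1]
      · have := hHi b (hFH h) x hx (by omega)
        rw [le_abs] at this; omega
    have hxc2 : x + 2 ≤ c := by
      rcases hcF' with rfl | h
      · linarith [(hHr x hx).2]
      · have := hHi x hx c (hFH h) (by omega)
        rw [le_abs] at this; omega
    have hc4 : c = b + 4 := by omega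
    refine (hGmem x).2 (Or.inr ⟨b, hbF', ?_, ?_, by omega⟩)
    · rcases hcF' with h | h
      · left; omega
      · right; exact hc4 ▸ h
    · intro y hy hcon
      exact hmidbc y hy ⟨hcon.1, by omega⟩
  have hGfacet : IsPathFacet n G := ⟨hGr, hGi, fun G' h1 h2 h3 =>
    Finset.Subset.antisymm (hA G' h1 h2 (hFG.trans h3)) h3⟩
  exact ⟨hr, hi, ExistsUnique.intro G ⟨hGfacet, hFG⟩
    (fun K hK => (hK.1.2.2 G hGr hGi (hA K hK.1.1 hK.1.2.1 hK.2)).symm)⟩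

/-- Let `F = {a_1 < ⋯ < a_s} ⊆ [n]` be an independent set of the path graph `P_n`, with
the conventions `a_0 = -1`, `a_{s+1} = n+2`.  Then `F` is a free face of `Δ(P_n)` which is
minimal among the free faces contained in its unique containing facet iff `(a_1,…,a_s)` is
τ-permissible: all gaps `a_{i+1} - a_i` (for `0 ≤ i ≤ s`) lie in `{2,3,4}` and no index
`1 ≤ i ≤ s` has both neighbouring gaps equal to `2`. -/
theorem stmt19 (n s : ℕ) (hn : 2 ≤ n) (a : ℕ → ℤ)
    (h0 : a 0 = -1) (hlast : a (s + 1) = (n : ℤ) + 2)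
    (hmono : ∀ i j : ℕ, i < j → j ≤ s + 1 → a i < a j)
    (F : Finset ℤ)
    (hFmem : ∀ x : ℤ, x ∈ F ↔ ∃ i, 1 ≤ i ∧ i ≤ s ∧ a i = x)
    (hFsub : InVertexRange n F) (hFind : PathIndep F) :
    (IsPathFreeFace n F ∧ ∀ F' ⊆ F, IsPathFreeFace n F' → F' = F) ↔
    ((∀ i ≤ s, a (i + 1) - a i = 2 ∨ a (i + 1) - a i = 3 ∨ a (i + 1) - a i = 4) ∧
      ∀ i, 1 ≤ i → i ≤ s → ¬ (a (i + 1) - a i = 2 ∧ a i - a (i - 1) = 2)) := by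
  have haF : ∀ i, 1 ≤ i → i ≤ s → a i ∈ F := fun i h1 h2 => (hFmem (a i)).2 ⟨i, h1, h2, rfl⟩
  have hmono' : ∀ i j, i ≤ j → j ≤ s + 1 → a i ≤ a j := by
    intro i j hij hj
    rcases Nat.eq_or_lt_of_le hij with rfl | h
    · exact le_refl _
    · exact le_of_lt (hmono i j h hj)
  have hgap2 : ∀ i, i ≤ s → 2 ≤ a (i + 1) - a i := by
    intro i hi
    by_cases hint : 1 ≤ i ∧ i + 1 ≤ s
    · have h1 := haF i hint.1 (by omega)
      have h2 := haF (i + 1) (by omega) hint.2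
      have hne : a i ≠ a (i + 1) := ne_of_lt (hmono i (i + 1) (by omega) (by omega))
      have h3 := hFind _ h1 _ h2 hne
      rw [le_abs] at h3
      have h4 := hmono i (i + 1) (by omega) (by omega)
      omega
    · by_cases hi0 : i = 0
      · subst hi0
        by_cases hs0 : s = 0
        · subst hs0
          rw [hlast, h0]
          omega
        · have h1 := haF 1 le_rfl (by omega)
          have h2 := (hFsub _ h1).1
          rw [h0]
          have he : a (0 + 1) = a 1 := rfl
          omega
      · have his : i = s := by omega
        subst his
        rw [hlast]
        have h1 := haF i (by omega) le_rfl
        have h2 := (hFsub _ h1).2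
        omega
  have hlt_of : ∀ i j, i ≤ s + 1 → j ≤ s + 1 → a i < a j → i < j := by
    intro i j hi hj h
    by_contra hc
    push_neg at hc
    have := hmono' j i hc hi
    omega
  have hinj : ∀ i j, i ≤ s + 1 → j ≤ s + 1 → a i = a j → i = j := by
    intro i j hi hj h
    rcases lt_trichotomy i j with hlt | heq | hgt
    · have := hmono i j hlt hj; omega
    · exact heq
    · have := hmono j i hgt hi; omega
  have hloc : ∀ b : ℤ, (b = -1 ∨ b ∈ F) → ∃ j, j ≤ s ∧ a j = b := by
    intro b hb
    rcases hb with rfl | hb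
    · exact ⟨0, Nat.zero_le _, h0⟩
    · obtain ⟨j, h1, h2, h3⟩ := (hFmem b).1 hb
      exact ⟨j, h2, h3⟩
  have hloc' : ∀ c : ℤ, (c = (n:ℤ) + 2 ∨ c ∈ F) → ∃ k, 1 ≤ k ∧ k ≤ s + 1 ∧ a k = c := by
    intro c hc
    rcases hc with rfl | hc
    · exact ⟨s + 1, by omega, le_refl _, hlast⟩
    · obtain ⟨k, h1, h2, h3⟩ := (hFmem c).1 hc
      exact ⟨k, h1, by omega, h3⟩
  constructor
  · rintro ⟨hfree, hmin⟩
    have hgaps4 : ∀ i, i ≤ s → a (i + 1) - a i ≤ 4 := by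
      intro i hi
      by_contra hbig
      push_neg at hbig
      have hb : a i = -1 ∨ a i ∈ F := by
        rcases Nat.eq_zero_or_pos i with rfl | h
        · exact Or.inl h0
        · exact Or.inr (haF i h hi)
      have hc : a (i + 1) = (n:ℤ) + 2 ∨ a (i + 1) ∈ F := by
        rcases Nat.eq_or_lt_of_le hi with rfl | h
        · exact Or.inl hlast
        · exact Or.inr (haF (i + 1) (by omega) h)
      have hmid : ∀ x ∈ F, ¬ (a i < x ∧ x < a (i + 1)) := by
        intro x hx
        obtain ⟨m, hm1, hm2, rfl⟩ := (hFmem x).1 hx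
        rcases Nat.lt_or_ge m (i + 1) with h | h
        · have := hmono' m i (by omega) (by omega); omega
        · have := hmono' (i + 1) m h (by omega); omega
      exact path_notFree n F hFsub hFind (a i) (a (i + 1)) hb hc (by omega) hmid hfree
    refine ⟨fun i hi => by have := hgap2 i hi; have := hgaps4 i hi; omega, ?_⟩
    intro i h1 h2
    rintro ⟨hg1, hg0⟩
    obtain ⟨m, rfl⟩ : ∃ m, i = m + 1 := ⟨i - 1, by omega⟩
    have hg0' : a (m + 1) - a m = 2 := hg0
    have hg1' : a (m + 2) - a (m + 1) = 2 := hg1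
    set F' := F.erase (a (m + 1)) with hF'
    have hsub' : F' ⊆ F := Finset.erase_subset _ _
    have hfree' : IsPathFreeFace n F' := by
      apply path_free n F' (inVertexRange_subset hsub' hFsub) (pathIndep_subset hsub' hFind)
      intro b c hb hc hbc hmid
      obtain ⟨j, hj, rfl⟩ := hloc b (hb.imp id (fun h => hsub' h))
      obtain ⟨k, hk1, hk2, rfl⟩ := hloc' c (hc.imp id (fun h => hsub' h))
      have hjk : j < k := hlt_of j k (by omega) hk2 hbc
      have hbetween : ∀ p, j < p → p < k → p = m + 1 := by
        intro p hp1 hp2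
        have hpF : a p ∈ F := haF p (by omega) (by omega)
        by_contra hne
        have hpF' : a p ∈ F' := Finset.mem_erase.2
          ⟨fun he => hne (hinj p (m + 1) (by omega) (by omega) he), hpF⟩
        exact hmid (a p) hpF' ⟨hmono j p hp1 (by omega), hmono p k hp2 hk2⟩
      have hk_le : k ≤ j + 2 := by
        by_contra hc'
        push_neg at hc'
        have e1 := hbetween (j + 1) (by omega) (by omega)
        have e2 := hbetween (j + 2) (by omega) (by omega)
        omega
      rcases (by omega : k = j + 1 ∨ k = j + 2) with rfl | rfl
      · have := hgaps4 j (by omega)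
        omega
      · have e1 := hbetween (j + 1) (by omega) (by omega)
        have hjm : j = m := by omega
        subst hjm
        have e2 : a (j + 2) = a (j + 1 + 1) := rfl
        omega
    have heq := hmin F' hsub' hfree'
    have hmemF : a (m + 1) ∈ F := haF (m + 1) (by omega) h2
    rw [← heq] at hmemF
    exact (Finset.mem_erase.1 hmemF).1 rfl
  · rintro ⟨hg, hp⟩
    have hfree : IsPathFreeFace n F := by
      apply path_free n F hFsub hFind
      intro b c hb hc hbc hmid
      obtain ⟨j, hj, rfl⟩ := hloc b hb
      obtain ⟨k, hk1, hk2, rfl⟩ := hloc' c hc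
      have hjk : j < k := hlt_of j k (by omega) hk2 hbc
      have hk_eq : k = j + 1 := by
        by_contra h
        have h1 : j + 1 < k := by omega
        have hm : a (j + 1) ∈ F := haF (j + 1) (by omega) (by omega)
        exact hmid _ hm ⟨hmono j (j + 1) (by omega) (by omega), hmono (j + 1) k h1 hk2⟩
      subst hk_eq
      have := hg j (by omega)
      omega
    refine ⟨hfree, ?_⟩
    intro F' hsub' hfree'
    by_contra hne
    obtain ⟨x, hxF, hxF'⟩ : ∃ x ∈ F, x ∉ F' := by
      by_contra h
      push_neg at h
      exact hne (Finset.Subset.antisymm hsub' h)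
    obtain ⟨i, hi1, hi2, rfl⟩ := (hFmem x).1 hxF
    have hai1 : 1 ≤ a i := (hFsub _ hxF).1
    have hai2 : a i ≤ (n:ℤ) := (hFsub _ hxF).2
    obtain ⟨b, hbm, hbx, hble⟩ := exists_left F' (a i) (-1) (by omega)
    obtain ⟨c, hcm, hxc, hcge⟩ := exists_right F' (a i) ((n:ℤ) + 2) (by omega)
    have hmid' : ∀ y ∈ F', ¬ (b < y ∧ y < c) := by
      rintro y hy ⟨hy1, hy2⟩
      rcases lt_trichotomy y (a i) with h | h | h
      · have := hble y hy h; omega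
      · exact hxF' (h ▸ hy)
      · have := hcge y hy h; omega
    obtain ⟨j, hj, rfl⟩ := hloc b (hbm.imp id (fun h => hsub' h))
    obtain ⟨k, hk1, hk2, rfl⟩ := hloc' c (hcm.imp id (fun h => hsub' h))
    have hji : j < i := hlt_of j i (by omega) (by omega) hbx
    have hik : i < k := hlt_of i k (by omega) hk2 hxc
    have hcb5 : 5 ≤ a k - a j := by
      rcases (by omega : k = j + 2 ∨ j + 3 ≤ k) with rfl | hk'
      · have hi' : i = j + 1 := by omega
        subst hi'
        have hpi : ¬ (a (j + 2) - a (j + 1) = 2 ∧ a (j + 1) - a j = 2) := hp (j + 1) hi1 hi2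
        have g1 : 2 ≤ a (j + 2) - a (j + 1) := hgap2 (j + 1) (by omega)
        have g0 : 2 ≤ a (j + 1) - a j := hgap2 j (by omega)
        omega
      · have g0 : 2 ≤ a (j + 1) - a j := hgap2 j (by omega)
        have g1 : 2 ≤ a (j + 2) - a (j + 1) := hgap2 (j + 1) (by omega)
        have g2 : 2 ≤ a (j + 3) - a (j + 2) := hgap2 (j + 2) (by omega)
        have := hmono' (j + 3) k hk' hk2
        omega
    exact path_notFree n F' (inVertexRange_subset hsub' hFsub)
      (pathIndep_subset hsub' hFind) (a j) (a k) hbm hcm hcb5 hmid' hfree'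
end
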